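/- arXiv:1504.02965 — 2 statements merged into one kernel-verified Lean document; each statement's English description precedes it below -/
import Mathlib

section
/- For every n ≥ 1 and all x, ξ ∈ ℝ^d one has a_{n+1}(x) ≥ a_n(x), A_{n+1}(x,ξ) ≥ A_n(x,ξ), r_{n+1}(ξ) ≤ r_n(ξ), and R_n(x,ξ) ≥ R_{n−1}(x,ξ); in particular the pointwise limits A := lim_n A_n and R := lim_n R_n exist and take values in [0,1]. -/
open MeasureTheory Filter Metric Bornology
open scoped ENNReal NNReal Topology

noncomputable section

attribute [local instance] Classical.propDecidable

/-- Euclidean space `ℝ^d`. -/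
abbrev Rd (d : ℕ) : Type := EuclideanSpace ℝ (Fin d)

/-- Locally finite: finite on bounded sets. -/
def LocFin {d : ℕ} (μ : Measure (Rd d)) : Prop :=
  ∀ s : Set (Rd d), IsBounded s → μ s < ⊤

/-- A sub-balancing density for `(φ, ψ)`. -/
def IsSubBalancing {d : ℕ} (φ ψ : Measure (Rd d)) (f : Rd d → Rd d → ℝ) : Prop :=
  Measurable (Function.uncurry f) ∧ (∀ x ξ, 0 ≤ f x ξ) ∧
  (∀ x, ∫⁻ ξ, ENNReal.ofReal (f x ξ) ∂ψ ≤ 1) ∧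
  (∀ ξ, ∫⁻ x, ENNReal.ofReal (f x ξ) ∂φ ≤ 1)

/-- A balancing density for `(φ, ψ)`. -/
def IsBalancing {d : ℕ} (φ ψ : Measure (Rd d)) (f : Rd d → Rd d → ℝ) : Prop :=
  IsSubBalancing φ ψ f ∧
  (∀ᵐ x ∂φ, ∫⁻ ξ, ENNReal.ofReal (f x ξ) ∂ψ = 1) ∧
  (∀ᵐ ξ ∂ψ, ∫⁻ x, ENNReal.ofReal (f x ξ) ∂φ = 1)

/-- A constrained density for `(φ, ψ)`. -/
def IsConstrainedDensity {d : ℕ} (φ ψ : Measure (Rd d)) (f : Rd d → Rd d → ℝ) : Prop :=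
  IsSubBalancing φ ψ f ∧ ∀ x ξ, f x ξ ≤ 1

/-- The site `x` is `f`-unexhausted. -/
def Unexhausted {d : ℕ} (ψ : Measure (Rd d)) (f : Rd d → Rd d → ℝ) (x : Rd d) : Prop :=
  ∫⁻ ξ, ENNReal.ofReal (f x ξ) ∂ψ < 1

/-- The center `ξ` is `f`-unsated. -/
def Unsated {d : ℕ} (φ : Measure (Rd d)) (f : Rd d → Rd d → ℝ) (ξ : Rd d) : Prop :=
  ∫⁻ x, ENNReal.ofReal (f x ξ) ∂φ < 1

/-- The site `x₀` `f`-desires the center `ξ₀`. -/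
def SiteDesires {d : ℕ} (ψ : Measure (Rd d)) (f : Rd d → Rd d → ℝ) (x₀ ξ₀ : Rd d) : Prop :=
  f x₀ ξ₀ < 1 ∧ (Unexhausted ψ f x₀ ∨ ∃ ξ₁, dist x₀ ξ₀ < dist x₀ ξ₁ ∧ 0 < f x₀ ξ₁)

/-- The center `ξ₀` `f`-desires the site `x₀`. -/
def CenterDesires {d : ℕ} (φ : Measure (Rd d)) (f : Rd d → Rd d → ℝ) (x₀ ξ₀ : Rd d) : Prop :=
  f x₀ ξ₀ < 1 ∧ (Unsated φ f ξ₀ ∨ ∃ x₁, dist x₀ ξ₀ < dist x₁ ξ₀ ∧ 0 < f x₁ ξ₀)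

/-- A stable constrained density for `(φ, ψ)`. -/
def IsStableDensity {d : ℕ} (φ ψ : Measure (Rd d)) (f : Rd d → Rd d → ℝ) : Prop :=
  IsConstrainedDensity φ ψ f ∧
  ¬∃ x₀ ξ₀, SiteDesires ψ f x₀ ξ₀ ∧ CenterDesires φ f x₀ ξ₀

/-- Application radius given previous rejection function `Rp`. -/
def appRad {d : ℕ} (ψ : Measure (Rd d)) (Rp : Rd d → Rd d → ℝ) (x : Rd d) : ℝ≥0∞ :=
  sSup (ENNReal.ofReal '' {a : ℝ | 0 ≤ a ∧
    ∫⁻ ξ in closedBall x a, ENNReal.ofReal (1 - Rp x ξ) ∂ψ ≤ 1})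

/-- The boundary weight `c` in the application step. -/
def appC {d : ℕ} (ψ : Measure (Rd d)) (Rp : Rd d → Rd d → ℝ) (x : Rd d) : ℝ :=
  if appRad ψ Rp x ≠ ⊤ ∧
      0 < ∫⁻ ξ in sphere x (appRad ψ Rp x).toReal, ENNReal.ofReal (1 - Rp x ξ) ∂ψ then
    1 - (1 - (∫⁻ ξ in ball x (appRad ψ Rp x).toReal, ENNReal.ofReal (1 - Rp x ξ) ∂ψ).toReal) /
      (∫⁻ ξ in sphere x (appRad ψ Rp x).toReal, ENNReal.ofReal (1 - Rp x ξ) ∂ψ).toReal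
  else 1

/-- The application function built from the previous rejection function `Rp`. -/
def appFun {d : ℕ} (ψ : Measure (Rd d)) (Rp : Rd d → Rd d → ℝ) (x ξ : Rd d) : ℝ :=
  if ENNReal.ofReal (dist x ξ) < appRad ψ Rp x then 1
  else if ENNReal.ofReal (dist x ξ) = appRad ψ Rp x then
    appC ψ Rp x * Rp x ξ + (1 - appC ψ Rp x)
  else 0

/-- Rejection radius given the current application function `A`. -/
def rejRad {d : ℕ} (φ : Measure (Rd d)) (A : Rd d → Rd d → ℝ) (ξ : Rd d) : ℝ≥0∞ :=
  sSup (ENNReal.ofReal '' {r : ℝ | 0 ≤ r ∧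
    ∫⁻ x in closedBall ξ r, ENNReal.ofReal (A x ξ) ∂φ ≤ 1})

/-- The boundary weight `c′` in the rejection step. -/
def rejC {d : ℕ} (φ : Measure (Rd d)) (A : Rd d → Rd d → ℝ) (ξ : Rd d) : ℝ :=
  if rejRad φ A ξ ≠ ⊤ ∧
      0 < ∫⁻ x in sphere ξ (rejRad φ A ξ).toReal, ENNReal.ofReal (A x ξ) ∂φ then
    1 - (1 - (∫⁻ x in ball ξ (rejRad φ A ξ).toReal, ENNReal.ofReal (A x ξ) ∂φ).toReal) /
      (∫⁻ x in sphere ξ (rejRad φ A ξ).toReal, ENNReal.ofReal (A x ξ) ∂φ).toReal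
  else 0

/-- The rejection function built from the current application function `A`. -/
def rejFun {d : ℕ} (φ : Measure (Rd d)) (A : Rd d → Rd d → ℝ) (x ξ : Rd d) : ℝ :=
  if ENNReal.ofReal (dist x ξ) < rejRad φ A ξ then 0
  else if ENNReal.ofReal (dist x ξ) = rejRad φ A ξ then rejC φ A ξ * A x ξ
  else A x ξ

/-- `GS_R φ ψ n` is the rejection function `Rₙ` of the site-optimal Gale–Shapley
algorithm (so `GS_R φ ψ 0 = R₀ = 0`). -/
def GS_R {d : ℕ} (φ ψ : Measure (Rd d)) : ℕ → Rd d → Rd d → ℝ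
  | 0 => fun _ _ => 0
  | n + 1 => rejFun φ (appFun ψ (GS_R φ ψ n))

/-- `GS_A φ ψ n` is the application function `Aₙ₊₁` (the one built from `Rₙ`). -/
def GS_A {d : ℕ} (φ ψ : Measure (Rd d)) (n : ℕ) : Rd d → Rd d → ℝ :=
  appFun ψ (GS_R φ ψ n)

/-- `GS_a φ ψ n` is the application radius `aₙ₊₁`. -/
def GS_a {d : ℕ} (φ ψ : Measure (Rd d)) (n : ℕ) : Rd d → ℝ≥0∞ :=
  appRad ψ (GS_R φ ψ n)

/-- `GS_r φ ψ n` is the rejection radius `rₙ₊₁`. -/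
def GS_r {d : ℕ} (φ ψ : Measure (Rd d)) (n : ℕ) : Rd d → ℝ≥0∞ :=
  rejRad φ (GS_A φ ψ n)

/-- The limiting application function `A = limₙ Aₙ` (a monotone limit, hence a `⨆`). -/
def GS_Alim {d : ℕ} (φ ψ : Measure (Rd d)) (x ξ : Rd d) : ℝ := ⨆ n, GS_A φ ψ n x ξ

/-- The limiting rejection function `R = limₙ Rₙ` (a monotone limit, hence a `⨆`). -/
def GS_Rlim {d : ℕ} (φ ψ : Measure (Rd d)) (x ξ : Rd d) : ℝ := ⨆ n, GS_R φ ψ n x ξ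

/-- The site-optimal density `f_s = A − R` for `(φ, ψ)`. -/
def siteOptimal {d : ℕ} (φ ψ : Measure (Rd d)) (x ξ : Rd d) : ℝ :=
  GS_Alim φ ψ x ξ - GS_Rlim φ ψ x ξ

/-- The center-optimal density for `(φ, ψ)`. -/
def centerOptimal {d : ℕ} (φ ψ : Measure (Rd d)) (x ξ : Rd d) : ℝ :=
  siteOptimal ψ φ ξ x

/-- Assumption U. -/
def AssumptionU {d : ℕ} (φ ψ : Measure (Rd d)) : Prop :=
  (∀ᵐ x ∂φ, ∀ r : ℝ, 0 < r → ∃ s ∈ sphere x r, ψ (sphere x r \ {s}) = 0) ∧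
  (∀ᵐ ξ ∂ψ, ∀ r : ℝ, 0 < r → ∃ s ∈ sphere ξ r, φ (sphere ξ r \ {s}) = 0)

/-- A measurable flow on `Ω`. -/
def IsMeasurableFlow {Ω : Type*} [MeasurableSpace Ω] {d : ℕ} (θ : Rd d → Ω → Ω) : Prop :=
  Measurable (fun p : Rd d × Ω => θ p.1 p.2) ∧ θ 0 = id ∧
  ∀ s t : Rd d, θ s ∘ θ t = θ (s + t)

/-- `P` is invariant under the flow `θ`. -/
def IsFlowInvariant {Ω : Type*} [MeasurableSpace Ω] {d : ℕ} (θ : Rd d → Ω → Ω)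
    (P : Measure Ω) : Prop :=
  ∀ s, Measure.map (θ s) P = P

/-- `P` is ergodic for the flow `θ`. -/
def IsErgodicFlow {Ω : Type*} [MeasurableSpace Ω] {d : ℕ} (θ : Rd d → Ω → Ω)
    (P : Measure Ω) : Prop :=
  ∀ A : Set Ω, MeasurableSet A → (∀ s, θ s ⁻¹' A = A) → P A = 0 ∨ P A = 1

/-- A random measure: measurable and everywhere locally finite. -/
def IsRandomMeasure {Ω : Type*} [MeasurableSpace Ω] {d : ℕ} (Φ : Ω → Measure (Rd d)) : Prop :=
  (∀ B : Set (Rd d), MeasurableSet B → Measurable fun ω => Φ ω B) ∧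
  (∀ ω, LocFin (Φ ω))

/-- The random measure `Φ` is flow-adapted. -/
def FlowAdaptedMeasure {Ω : Type*} [MeasurableSpace Ω] {d : ℕ} (θ : Rd d → Ω → Ω)
    (Φ : Ω → Measure (Rd d)) : Prop :=
  ∀ ω s (B : Set (Rd d)), MeasurableSet B → Φ (θ s ω) B = Φ ω ((fun b => b + s) '' B)

/-- `Φ` has intensity `lam`. -/
def HasIntensity {Ω : Type*} [MeasurableSpace Ω] {d : ℕ} (P : Measure Ω)
    (Φ : Ω → Measure (Rd d)) (lam : ℝ≥0∞) : Prop :=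
  ∀ B : Set (Rd d), MeasurableSet B → ∫⁻ ω, Φ ω B ∂P = lam * volume B

/-- A flow-adapted jointly measurable function `F : Ω × ℝ^d × ℝ^d → ℝ`. -/
def FlowAdaptedKernel {Ω : Type*} [MeasurableSpace Ω] {d : ℕ} (θ : Rd d → Ω → Ω)
    (F : Ω → Rd d → Rd d → ℝ) : Prop :=
  Measurable (fun p : Ω × Rd d × Rd d => F p.1 p.2.1 p.2.2) ∧
  ∀ ω s x ξ, F (θ s ω) x ξ = F ω (x + s) (ξ + s)

/-- The shift `θ_t μ` of a measure: `(θ_t μ)(B) = μ(B + t)`. -/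
def shiftMeasure {d : ℕ} (t : Rd d) (μ : Measure (Rd d)) : Measure (Rd d) :=
  Measure.map (fun x => x - t) μ

/-- `s(x)` of the Voronoi transport kernel. -/
def vRad {d : ℕ} (ψ : Measure (Rd d)) (x : Rd d) : ℝ≥0∞ :=
  sSup (ENNReal.ofReal '' {s : ℝ | 0 ≤ s ∧ ψ (closedBall x s) ≤ 1})

/-- The boundary weight `c(x)` of the Voronoi density. -/
def vC {d : ℕ} (ψ : Measure (Rd d)) (x : Rd d) : ℝ :=
  if vRad ψ x ≠ ⊤ ∧ 0 < ψ (sphere x (vRad ψ x).toReal) then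
    (1 - (ψ (ball x (vRad ψ x).toReal)).toReal) / (ψ (sphere x (vRad ψ x).toReal)).toReal
  else 1

/-- The Voronoi density with respect to `ψ`. -/
def voronoiDensity {d : ℕ} (ψ : Measure (Rd d)) (x ξ : Rd d) : ℝ :=
  if ENNReal.ofReal (dist x ξ) < vRad ψ x then 1
  else if ENNReal.ofReal (dist x ξ) = vRad ψ x then vC ψ x
  else 0

/-- The Voronoi territory of `ξ` with respect to `ψ`. -/
def voronoiTerritory {d : ℕ} (ψ : Measure (Rd d)) (ξ : Rd d) : Set (Rd d) :=
  {x | 0 < voronoiDensity ψ x ξ}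

/-- The (topological) support of a measure. -/
def msupport {d : ℕ} (ψ : Measure (Rd d)) : Set (Rd d) := {x | ∀ U ∈ 𝓝 x, 0 < ψ U}

namespace GSaux
open Bornology

variable {d : ℕ}

lemma lint_le_meas {μ : Measure (Rd d)} {F : Rd d → ℝ≥0∞} (hF : ∀ y, F y ≤ 1)
    (s : Set (Rd d)) : ∫⁻ y in s, F y ∂μ ≤ μ s := by
  calc ∫⁻ y in s, F y ∂μ ≤ ∫⁻ _ in s, 1 ∂μ := lintegral_mono fun y => hF y
  _ = μ s := setLIntegral_one s

lemma lint_ne_top {μ : Measure (Rd d)} (hμ : LocFin μ) {F : Rd d → ℝ≥0∞} (hF : ∀ y, F y ≤ 1)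
    {s : Set (Rd d)} (hs : IsBounded s) : ∫⁻ y in s, F y ∂μ ≠ ⊤ :=
  ((lint_le_meas hF s).trans_lt (hμ s hs)).ne

/-- generic radius -/
def mRad (μ : Measure (Rd d)) (F : Rd d → ℝ≥0∞) (z : Rd d) : ℝ≥0∞ :=
  sSup (ENNReal.ofReal '' {a : ℝ | 0 ≤ a ∧ ∫⁻ y in closedBall z a, F y ∂μ ≤ 1})

lemma mRad_anti {μ : Measure (Rd d)} {F G : Rd d → ℝ≥0∞} (z : Rd d) (h : ∀ y, F y ≤ G y) :
    mRad μ G z ≤ mRad μ F z := by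
  refine sSup_le_sSup (Set.image_mono ?_)
  rintro a ⟨ha, hint⟩
  exact ⟨ha, le_trans (lintegral_mono fun y => h y) hint⟩

lemma le_one_of_lt_mRad {μ : Measure (Rd d)} {F : Rd d → ℝ≥0∞} {z : Rd d} {a : ℝ}
    (ha : 0 ≤ a) (h : ENNReal.ofReal a < mRad μ F z) :
    ∫⁻ y in closedBall z a, F y ∂μ ≤ 1 := by
  obtain ⟨b, hb, hab⟩ := lt_sSup_iff.1 h
  obtain ⟨a', ⟨_, hint⟩, rfl⟩ := hb
  refine le_trans (lintegral_mono_set (closedBall_subset_closedBall ?_)) hint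
  exact le_of_lt ((ENNReal.ofReal_lt_ofReal_iff_of_nonneg ha).1 hab)

lemma one_lt_of_mRad_lt {μ : Measure (Rd d)} {F : Rd d → ℝ≥0∞} {z : Rd d} {a : ℝ}
    (h : mRad μ F z < ENNReal.ofReal a) :
    1 < ∫⁻ y in closedBall z a, F y ∂μ := by
  by_contra hc
  push_neg at hc
  have ha : 0 ≤ a := le_of_lt (ENNReal.ofReal_pos.1 (lt_of_le_of_lt zero_le h))
  have hle : ENNReal.ofReal a ≤ mRad μ F z := le_sSup ⟨a, ⟨ha, hc⟩, rfl⟩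
  exact absurd hle (not_le.2 h)

lemma one_le_closedBall {μ : Measure (Rd d)} (hμ : LocFin μ) {F : Rd d → ℝ≥0∞}
    (hF : ∀ y, F y ≤ 1) {z : Rd d} (hne : mRad μ F z ≠ ⊤) :
    1 ≤ ∫⁻ y in closedBall z (mRad μ F z).toReal, F y ∂μ := by
  set r := (mRad μ F z).toReal with hr
  have hr0 : 0 ≤ r := ENNReal.toReal_nonneg
  set s : ℕ → Set (Rd d) := fun k => closedBall z (r + 1/(k+1)) \ closedBall z r with hs
  have hanti : Antitone s := by
    intro m n hmn
    refine Set.diff_subset_diff_left (closedBall_subset_closedBall ?_)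
    have h1 : (1:ℝ)/(n+1) ≤ 1/(m+1) := by
      apply one_div_le_one_div_of_le
      · positivity
      · have : (m:ℝ) ≤ n := by exact_mod_cast hmn
        linarith
    linarith
  have hinter : ⋂ k, s k = ∅ := by
    ext y
    simp only [Set.mem_iInter, Set.mem_empty_iff_false, iff_false]
    intro hy
    have h0 := hy 0
    rw [hs] at h0
    have hgt : r < dist y z := not_le.1 fun hc => h0.2 (mem_closedBall.2 hc)
    have hle : dist y z ≤ r := by
      refine le_of_forall_pos_le_add fun ε hε => ?_
      obtain ⟨k, hk⟩ := exists_nat_one_div_lt hε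
      have hk2 := (hy k).1
      rw [mem_closedBall] at hk2
      have hk' : (1:ℝ)/(k+1) < ε := by exact_mod_cast hk
      linarith
    linarith
  have hmeas : ∀ k, MeasurableSet (s k) := fun k =>
    measurableSet_closedBall.diff measurableSet_closedBall
  have hfin : μ (s 0) ≠ ⊤ :=
    ((measure_mono Set.diff_subset).trans_lt
      (hμ _ (isBounded_closedBall))).ne
  have htend : Tendsto (fun k => μ (s k)) atTop (𝓝 0) := by
    have := MeasureTheory.tendsto_measure_iInter_atTop
      (fun k => (hmeas k).nullMeasurableSet) hanti ⟨0, hfin⟩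
    rw [hinter, measure_empty] at this
    exact this
  have hcb : IsBounded (closedBall z r) := isBounded_closedBall
  have hIfin : ∫⁻ y in closedBall z r, F y ∂μ ≠ ⊤ := lint_ne_top hμ hF hcb
  have hbound : ∀ k, (1:ℝ≥0∞) ≤ (∫⁻ y in closedBall z r, F y ∂μ) + μ (s k) := by
    intro k
    have hlt : mRad μ F z < ENNReal.ofReal (r + 1/(k+1)) := by
      rw [hr] at *
      conv_lhs => rw [← ENNReal.ofReal_toReal hne]
      apply ENNReal.ofReal_lt_ofReal_iff_of_nonneg ENNReal.toReal_nonneg |>.2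
      have : (0:ℝ) < 1/(k+1) := by positivity
      linarith
    have h1 := one_lt_of_mRad_lt hlt
    have hsub : closedBall z (r + 1/(k+1)) ⊆ closedBall z r ∪ s k := by
      intro y hy
      by_cases hyr : y ∈ closedBall z r
      · exact Or.inl hyr
      · exact Or.inr ⟨hy, hyr⟩
    calc (1:ℝ≥0∞) ≤ ∫⁻ y in closedBall z (r + 1/(k+1)), F y ∂μ := h1.le
      _ ≤ ∫⁻ y in closedBall z r ∪ s k, F y ∂μ := lintegral_mono_set hsub
      _ ≤ (∫⁻ y in closedBall z r, F y ∂μ) + ∫⁻ y in s k, F y ∂μ :=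
          lintegral_union_le _ _ _
      _ ≤ (∫⁻ y in closedBall z r, F y ∂μ) + μ (s k) := by
          gcongr
          exact lint_le_meas hF _
  have htend' : Tendsto (fun k => (∫⁻ y in closedBall z r, F y ∂μ) + μ (s k)) atTop
      (𝓝 (∫⁻ y in closedBall z r, F y ∂μ)) := by
    have := Tendsto.const_add (∫⁻ y in closedBall z r, F y ∂μ) htend
    rwa [add_zero] at this
  exact ge_of_tendsto' htend' hbound

lemma ball_le_one {μ : Measure (Rd d)} (hμ : LocFin μ) {F : Rd d → ℝ≥0∞}
    (hF : ∀ y, F y ≤ 1) {z : Rd d} (hne : mRad μ F z ≠ ⊤) :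
    ∫⁻ y in ball z (mRad μ F z).toReal, F y ∂μ ≤ 1 := by
  set r := (mRad μ F z).toReal with hr
  rcases le_or_gt r 0 with h0 | h0
  · rw [ball_eq_empty.2 h0, Measure.restrict_empty, lintegral_zero_measure]
    exact zero_le_one
  set a : ℕ → ℝ := fun k => max 0 (r - 1/(k+1)) with hadef
  have ha0 : ∀ k, 0 ≤ a k := fun k => le_max_left _ _
  have haltr : ∀ k, a k < r := fun k => max_lt h0 (by
    have : (0:ℝ) < 1/(k+1) := by positivity
    linarith)
  have hamono : Monotone a := by
    intro m n hmn
    apply max_le_max (le_refl 0)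
    have h1 : (1:ℝ)/(n+1) ≤ 1/(m+1) := by
      apply one_div_le_one_div_of_le
      · positivity
      · have : (m:ℝ) ≤ n := by exact_mod_cast hmn
        linarith
    linarith
  set s : ℕ → Set (Rd d) := fun k => ball z r \ closedBall z (a k) with hs
  have hanti : Antitone s := fun m n hmn =>
    Set.diff_subset_diff_right (closedBall_subset_closedBall (hamono hmn))
  have hinter : ⋂ k, s k = ∅ := by
    ext y
    simp only [Set.mem_iInter, Set.mem_empty_iff_false, iff_false]
    intro hy
    have hlt : dist y z < r := mem_ball.1 (hy 0).1
    obtain ⟨k, hk⟩ := exists_nat_one_div_lt (sub_pos.2 hlt)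
    have hk' : (1:ℝ)/(k+1) < r - dist y z := by exact_mod_cast hk
    have : y ∈ closedBall z (a k) := by
      rw [mem_closedBall]
      have : dist y z ≤ r - 1/(k+1) := by linarith
      exact this.trans (le_max_right _ _)
    exact (hy k).2 this
  have hmeas : ∀ k, MeasurableSet (s k) := fun k =>
    measurableSet_ball.diff measurableSet_closedBall
  have hfin : μ (s 0) ≠ ⊤ :=
    ((measure_mono Set.diff_subset).trans_lt (hμ _ isBounded_ball)).ne
  have htend : Tendsto (fun k => μ (s k)) atTop (𝓝 0) := by
    have := MeasureTheory.tendsto_measure_iInter_atTop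
      (fun k => (hmeas k).nullMeasurableSet) hanti ⟨0, hfin⟩
    rw [hinter, measure_empty] at this
    exact this
  have hbound : ∀ k, ∫⁻ y in ball z r, F y ∂μ ≤ 1 + μ (s k) := by
    intro k
    have hltm : ENNReal.ofReal (a k) < mRad μ F z := by
      conv_rhs => rw [← ENNReal.ofReal_toReal hne]
      exact (ENNReal.ofReal_lt_ofReal_iff_of_nonneg (ha0 k)).2 (haltr k)
    have h1 := le_one_of_lt_mRad (ha0 k) hltm
    have hsub : ball z r ⊆ closedBall z (a k) ∪ s k := by
      intro y hy
      by_cases hyr : y ∈ closedBall z (a k)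
      · exact Or.inl hyr
      · exact Or.inr ⟨hy, hyr⟩
    calc ∫⁻ y in ball z r, F y ∂μ ≤ ∫⁻ y in closedBall z (a k) ∪ s k, F y ∂μ :=
          lintegral_mono_set hsub
      _ ≤ (∫⁻ y in closedBall z (a k), F y ∂μ) + ∫⁻ y in s k, F y ∂μ :=
          lintegral_union_le _ _ _
      _ ≤ 1 + μ (s k) := by
          gcongr
          exact lint_le_meas hF _
  have htend' : Tendsto (fun k => (1:ℝ≥0∞) + μ (s k)) atTop (𝓝 1) := by
    have := Tendsto.const_add (1:ℝ≥0∞) htend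
    rwa [add_zero] at this
  exact ge_of_tendsto' htend' hbound

lemma cb_split {μ : Measure (Rd d)} {F : Rd d → ℝ≥0∞} {z : Rd d} {r : ℝ} :
    ∫⁻ y in closedBall z r, F y ∂μ =
      (∫⁻ y in ball z r, F y ∂μ) + ∫⁻ y in sphere z r, F y ∂μ := by
  rw [← ball_union_sphere]
  refine lintegral_union isClosed_sphere.measurableSet ?_
  exact Set.disjoint_left.2 fun y h1 h2 => (mem_ball.1 h1).ne (mem_sphere.1 h2)

end GSaux

namespace GSaux2
open GSaux Bornology

variable {d : ℕ}

lemma isBounded_sphere' {z : Rd d} {r : ℝ} : IsBounded (sphere z r) :=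
  isBounded_closedBall.subset sphere_subset_closedBall

lemma appRad_eq (ψ : Measure (Rd d)) (Rp : Rd d → Rd d → ℝ) (x : Rd d) :
    appRad ψ Rp x = mRad ψ (fun ξ => ENNReal.ofReal (1 - Rp x ξ)) x := rfl

lemma rejRad_eq (φ : Measure (Rd d)) (A : Rd d → Rd d → ℝ) (ξ : Rd d) :
    rejRad φ A ξ = mRad φ (fun x => ENNReal.ofReal (A x ξ)) ξ := rfl

/-- Generic: bounds for `1 - (1 - B)/S` style constants. -/
lemma c_bounds {μ : Measure (Rd d)} (hμ : LocFin μ) {F : Rd d → ℝ≥0∞}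
    (hF : ∀ y, F y ≤ 1) {z : Rd d} (hne : mRad μ F z ≠ ⊤)
    (hS : 0 < ∫⁻ y in sphere z (mRad μ F z).toReal, F y ∂μ) :
    (1 - (∫⁻ y in ball z (mRad μ F z).toReal, F y ∂μ).toReal)
      / (∫⁻ y in sphere z (mRad μ F z).toReal, F y ∂μ).toReal ∈ Set.Icc (0:ℝ) 1 := by
  set B := ∫⁻ y in ball z (mRad μ F z).toReal, F y ∂μ with hBdef
  set S := ∫⁻ y in sphere z (mRad μ F z).toReal, F y ∂μ with hSdef
  have hBfin : B ≠ ⊤ := lint_ne_top hμ hF isBounded_ball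
  have hSfin : S ≠ ⊤ := lint_ne_top hμ hF isBounded_sphere'
  have hB1 : B ≤ 1 := ball_le_one hμ hF hne
  have hcb : 1 ≤ B + S := by
    rw [hBdef, hSdef, ← cb_split]
    exact one_le_closedBall hμ hF hne
  have hSt : 0 < S.toReal := ENNReal.toReal_pos hS.ne' hSfin
  have hBt : B.toReal ≤ 1 := by
    have := ENNReal.toReal_mono ENNReal.one_ne_top hB1
    rwa [ENNReal.toReal_one] at this
  have hBSt : 1 ≤ B.toReal + S.toReal := by
    have := ENNReal.toReal_mono (ENNReal.add_ne_top.2 ⟨hBfin, hSfin⟩) hcb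
    rwa [ENNReal.toReal_one, ENNReal.toReal_add hBfin hSfin] at this
  constructor
  · exact div_nonneg (by linarith) hSt.le
  · rw [div_le_one hSt]
    linarith

lemma appC_mem {ψ : Measure (Rd d)} (hψ : LocFin ψ) {Rp : Rd d → Rd d → ℝ} {x : Rd d}
    (h0 : ∀ ξ, 0 ≤ Rp x ξ) (hne : appRad ψ Rp x ≠ ⊤) :
    appC ψ Rp x ∈ Set.Icc (0:ℝ) 1 := by
  have hF : ∀ ξ, ENNReal.ofReal (1 - Rp x ξ) ≤ 1 := fun ξ =>
    ENNReal.ofReal_le_one.2 (by linarith [h0 ξ])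
  unfold appC
  rw [appRad_eq ψ Rp x]
  rw [appRad_eq ψ Rp x] at hne
  split_ifs with h
  · obtain ⟨-, hS⟩ := h
    have hmem := c_bounds hψ hF (z := x) hne hS
    obtain ⟨h1, h2⟩ := hmem
    exact ⟨by linarith, by linarith⟩
  · exact ⟨zero_le_one, le_rfl⟩

lemma rejC_mem {φ : Measure (Rd d)} (hφ : LocFin φ) {A : Rd d → Rd d → ℝ} {ξ : Rd d}
    (hA1 : ∀ x, A x ξ ≤ 1) (hne : rejRad φ A ξ ≠ ⊤) :
    rejC φ A ξ ∈ Set.Icc (0:ℝ) 1 := by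
  have hF : ∀ x, ENNReal.ofReal (A x ξ) ≤ 1 := fun x => ENNReal.ofReal_le_one.2 (hA1 x)
  unfold rejC
  rw [rejRad_eq φ A ξ]
  rw [rejRad_eq φ A ξ] at hne
  split_ifs with h
  · obtain ⟨-, hS⟩ := h
    have hmem := c_bounds hφ hF (z := ξ) hne hS
    obtain ⟨h1, h2⟩ := hmem
    exact ⟨by linarith, by linarith⟩
  · exact ⟨le_rfl, zero_le_one⟩

lemma appFun_nonneg {ψ : Measure (Rd d)} (hψ : LocFin ψ) {Rp : Rd d → Rd d → ℝ} {x : Rd d}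
    (h0 : ∀ ξ, 0 ≤ Rp x ξ) (ξ : Rd d) : 0 ≤ appFun ψ Rp x ξ := by
  unfold appFun
  split_ifs with hlt heq
  · exact zero_le_one
  · have hne : appRad ψ Rp x ≠ ⊤ := by rw [← heq]; exact ENNReal.ofReal_ne_top
    obtain ⟨hc0, hc1⟩ := appC_mem hψ h0 hne
    nlinarith [h0 ξ]
  · exact le_rfl

lemma appFun_le_one {ψ : Measure (Rd d)} (hψ : LocFin ψ) {Rp : Rd d → Rd d → ℝ} {x : Rd d}
    (h0 : ∀ ξ, 0 ≤ Rp x ξ) (h1 : ∀ ξ, Rp x ξ ≤ 1) (ξ : Rd d) : appFun ψ Rp x ξ ≤ 1 := by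
  unfold appFun
  split_ifs with hlt heq
  · exact le_rfl
  · have hne : appRad ψ Rp x ≠ ⊤ := by rw [← heq]; exact ENNReal.ofReal_ne_top
    obtain ⟨hc0, hc1⟩ := appC_mem hψ h0 hne
    nlinarith [h1 ξ]
  · exact zero_le_one

lemma rejFun_nonneg {φ : Measure (Rd d)} (hφ : LocFin φ) {A : Rd d → Rd d → ℝ} {ξ : Rd d}
    (hA0 : ∀ x, 0 ≤ A x ξ) (hA1 : ∀ x, A x ξ ≤ 1) (x : Rd d) : 0 ≤ rejFun φ A x ξ := by
  unfold rejFun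
  split_ifs with hlt heq
  · exact le_rfl
  · have hne : rejRad φ A ξ ≠ ⊤ := by rw [← heq]; exact ENNReal.ofReal_ne_top
    obtain ⟨hc0, hc1⟩ := rejC_mem hφ hA1 hne
    exact mul_nonneg hc0 (hA0 x)
  · exact hA0 x

lemma rejFun_le {φ : Measure (Rd d)} (hφ : LocFin φ) {A : Rd d → Rd d → ℝ} {ξ : Rd d}
    (hA0 : ∀ x, 0 ≤ A x ξ) (hA1 : ∀ x, A x ξ ≤ 1) (x : Rd d) : rejFun φ A x ξ ≤ A x ξ := by
  unfold rejFun
  split_ifs with hlt heq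
  · exact hA0 x
  · have hne : rejRad φ A ξ ≠ ⊤ := by rw [← heq]; exact ENNReal.ofReal_ne_top
    obtain ⟨hc0, hc1⟩ := rejC_mem hφ hA1 hne
    exact mul_le_of_le_one_left (hA0 x) hc1
  · exact le_rfl

end GSaux2

namespace GSaux3
open GSaux GSaux2 Bornology

variable {d : ℕ}

lemma appRad_mono {ψ : Measure (Rd d)} {f g : Rd d → Rd d → ℝ} {x : Rd d}
    (hfg : ∀ ξ, f x ξ ≤ g x ξ) : appRad ψ f x ≤ appRad ψ g x := by
  rw [appRad_eq, appRad_eq]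
  exact mRad_anti x fun ξ => ENNReal.ofReal_le_ofReal (by linarith [hfg ξ])

lemma rejRad_anti {φ : Measure (Rd d)} {A A' : Rd d → Rd d → ℝ} {ξ : Rd d}
    (h : ∀ x, A x ξ ≤ A' x ξ) : rejRad φ A' ξ ≤ rejRad φ A ξ := by
  rw [rejRad_eq, rejRad_eq]
  exact mRad_anti ξ fun x => ENNReal.ofReal_le_ofReal (h x)

lemma appFun_mono {ψ : Measure (Rd d)} (hψ : LocFin ψ) {f g : Rd d → Rd d → ℝ} {x : Rd d}
    (h0 : ∀ η, 0 ≤ f x η) (hfg : ∀ η, f x η ≤ g x η) (h1 : ∀ η, g x η ≤ 1) (ξ : Rd d) :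
    appFun ψ f x ξ ≤ appFun ψ g x ξ := by
  have hg0 : ∀ η, 0 ≤ g x η := fun η => (h0 η).trans (hfg η)
  have hf1 : ∀ η, f x η ≤ 1 := fun η => (hfg η).trans (h1 η)
  have hFf : ∀ η, ENNReal.ofReal (1 - f x η) ≤ 1 := fun η =>
    ENNReal.ofReal_le_one.2 (by linarith [h0 η])
  have hFg : ∀ η, ENNReal.ofReal (1 - g x η) ≤ 1 := fun η =>
    ENNReal.ofReal_le_one.2 (by linarith [hg0 η])
  have hGF : ∀ η, ENNReal.ofReal (1 - g x η) ≤ ENNReal.ofReal (1 - f x η) := fun η =>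
    ENNReal.ofReal_le_ofReal (by linarith [hfg η])
  have hrad : appRad ψ f x ≤ appRad ψ g x := appRad_mono hfg
  rcases lt_trichotomy (ENNReal.ofReal (dist x ξ)) (appRad ψ f x) with hc | hc | hc
  · unfold appFun
    rw [if_pos hc, if_pos (hc.trans_le hrad)]
  · -- hc : D = appRad f
    have hne_f : appRad ψ f x ≠ ⊤ := by rw [← hc]; exact ENNReal.ofReal_ne_top
    obtain ⟨hcf0, hcf1⟩ := appC_mem hψ h0 hne_f
    rcases (hc.le.trans hrad).lt_or_eq with hc2 | hc2
    · -- D < appRad g : RHS = 1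
      unfold appFun
      rw [if_neg (by rw [hc]; exact lt_irrefl _), if_pos hc, if_pos hc2]
      nlinarith [mul_nonneg hcf0 (sub_nonneg.2 (hf1 ξ))]
    · -- D = appRad g : main case
      have hne_g : appRad ψ g x ≠ ⊤ := by rw [← hc2]; exact ENNReal.ofReal_ne_top
      obtain ⟨hcg0, hcg1⟩ := appC_mem hψ hg0 hne_g
      have hafg : appRad ψ f x = appRad ψ g x := hc.symm.trans hc2
      unfold appFun
      rw [if_neg (by rw [hc]; exact lt_irrefl _), if_pos hc,
          if_neg (by rw [hc2]; exact lt_irrefl _), if_pos hc2]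
      have hkey : appC ψ g x * (1 - g x ξ) ≤ appC ψ f x * (1 - f x ξ) := by
        -- integrals at the common radius
        have hBle : (∫⁻ η in ball x (appRad ψ g x).toReal, ENNReal.ofReal (1 - g x η) ∂ψ)
            ≤ ∫⁻ η in ball x (appRad ψ g x).toReal, ENNReal.ofReal (1 - f x η) ∂ψ :=
          lintegral_mono fun η => hGF η
        have hSle : (∫⁻ η in sphere x (appRad ψ g x).toReal, ENNReal.ofReal (1 - g x η) ∂ψ)
            ≤ ∫⁻ η in sphere x (appRad ψ g x).toReal, ENNReal.ofReal (1 - f x η) ∂ψ :=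
          lintegral_mono fun η => hGF η
        have hBffin : (∫⁻ η in ball x (appRad ψ g x).toReal, ENNReal.ofReal (1 - f x η) ∂ψ) ≠ ⊤ :=
          lint_ne_top hψ hFf isBounded_ball
        have hSffin : (∫⁻ η in sphere x (appRad ψ g x).toReal, ENNReal.ofReal (1 - f x η) ∂ψ) ≠ ⊤ :=
          lint_ne_top hψ hFf isBounded_sphere'
        have hBgfin : (∫⁻ η in ball x (appRad ψ g x).toReal, ENNReal.ofReal (1 - g x η) ∂ψ) ≠ ⊤ :=
          lint_ne_top hψ hFg isBounded_ball
        have hSgfin : (∫⁻ η in sphere x (appRad ψ g x).toReal, ENNReal.ofReal (1 - g x η) ∂ψ) ≠ ⊤ :=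
          lint_ne_top hψ hFg isBounded_sphere'
        have hBf1 : (∫⁻ η in ball x (appRad ψ g x).toReal, ENNReal.ofReal (1 - f x η) ∂ψ) ≤ 1 := by
          rw [← hafg]; exact ball_le_one hψ hFf hne_f
        have hcbg : (1:ℝ≥0∞) ≤ (∫⁻ η in ball x (appRad ψ g x).toReal, ENNReal.ofReal (1 - g x η) ∂ψ)
            + ∫⁻ η in sphere x (appRad ψ g x).toReal, ENNReal.ofReal (1 - g x η) ∂ψ := by
          rw [← cb_split]
          exact one_le_closedBall hψ hFg hne_g
        unfold appC
        rw [hafg]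
        split_ifs with hPg hPf hPf
        · -- both main branch
          have hSgpos := hPg.2
          have hSfpos := hPf.2
          set Bf := (∫⁻ η in ball x (appRad ψ g x).toReal, ENNReal.ofReal (1 - f x η) ∂ψ) with hBfd
          set Sf := (∫⁻ η in sphere x (appRad ψ g x).toReal, ENNReal.ofReal (1 - f x η) ∂ψ) with hSfd
          set Bg := (∫⁻ η in ball x (appRad ψ g x).toReal, ENNReal.ofReal (1 - g x η) ∂ψ) with hBgd
          set Sg := (∫⁻ η in sphere x (appRad ψ g x).toReal, ENNReal.ofReal (1 - g x η) ∂ψ) with hSgd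
          have hSft : 0 < Sf.toReal := ENNReal.toReal_pos hSfpos.ne' hSffin
          have hSgt : 0 < Sg.toReal := ENNReal.toReal_pos hSgpos.ne' hSgfin
          have hBt : Bg.toReal ≤ Bf.toReal := ENNReal.toReal_mono hBffin hBle
          have hSt : Sg.toReal ≤ Sf.toReal := ENNReal.toReal_mono hSffin hSle
          have hBft1 : Bf.toReal ≤ 1 := by
            have := ENNReal.toReal_mono ENNReal.one_ne_top hBf1
            rwa [ENNReal.toReal_one] at this
          have hcbgt : 1 ≤ Bg.toReal + Sg.toReal := by
            have := ENNReal.toReal_mono (ENNReal.add_ne_top.2 ⟨hBgfin, hSgfin⟩) hcbg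
            rwa [ENNReal.toReal_one, ENNReal.toReal_add hBgfin hSgfin] at this
          have hdiv : (1 - Bf.toReal) / Sf.toReal ≤ (1 - Bg.toReal) / Sg.toReal := by
            rw [div_le_div_iff₀ hSft hSgt]
            nlinarith [mul_nonneg (by linarith : (0:ℝ) ≤ 1 - Bf.toReal)
              (by linarith : (0:ℝ) ≤ Sf.toReal - Sg.toReal)]
          have hdg1 : (1 - Bg.toReal) / Sg.toReal ≤ 1 := by
            rw [div_le_one hSgt]; linarith
          have hdf0 : 0 ≤ (1 - Bf.toReal) / Sf.toReal :=
            div_nonneg (by linarith) hSft.le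
          have h1g : 0 ≤ 1 - g x ξ := by linarith [h1 ξ]
          have hstep1 : (1 - (1 - Bg.toReal) / Sg.toReal) * (1 - g x ξ)
              ≤ (1 - (1 - Bf.toReal) / Sf.toReal) * (1 - g x ξ) :=
            mul_le_mul_of_nonneg_right (by linarith) h1g
          have hstep2 : (1 - (1 - Bf.toReal) / Sf.toReal) * (1 - g x ξ)
              ≤ (1 - (1 - Bf.toReal) / Sf.toReal) * (1 - f x ξ) :=
            mul_le_mul_of_nonneg_left (by linarith [hfg ξ]) (by linarith)
          linarith
        · -- g main, f else: contradiction since 0 < Sg ≤ Sf = 0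
          exfalso
          have hSf0 : (∫⁻ η in sphere x (appRad ψ g x).toReal, ENNReal.ofReal (1 - f x η) ∂ψ) = 0 := by
            have hnl : ¬ 0 < (∫⁻ η in sphere x (appRad ψ g x).toReal, ENNReal.ofReal (1 - f x η) ∂ψ) :=
              fun h => hPf ⟨hne_g, h⟩
            exact le_zero_iff.1 (not_lt.1 hnl)
          exact absurd (le_zero_iff.1 (hSf0 ▸ hSle)) hPg.2.ne'
        · -- g else, f main: then the ball integral for f is exactly 1
          have hSg0 : (∫⁻ η in sphere x (appRad ψ g x).toReal, ENNReal.ofReal (1 - g x η) ∂ψ) = 0 := by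
            have hnl : ¬ 0 < (∫⁻ η in sphere x (appRad ψ g x).toReal, ENNReal.ofReal (1 - g x η) ∂ψ) :=
              fun h => hPg ⟨hne_g, h⟩
            exact le_zero_iff.1 (not_lt.1 hnl)
          have hBgge : (1:ℝ≥0∞) ≤ ∫⁻ η in ball x (appRad ψ g x).toReal, ENNReal.ofReal (1 - g x η) ∂ψ := by
            rw [hSg0, add_zero] at hcbg; exact hcbg
          have hBfeq : (∫⁻ η in ball x (appRad ψ g x).toReal, ENNReal.ofReal (1 - f x η) ∂ψ) = 1 :=
            le_antisymm hBf1 (hBgge.trans hBle)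
          have hBft : (∫⁻ η in ball x (appRad ψ g x).toReal, ENNReal.ofReal (1 - f x η) ∂ψ).toReal = 1 := by
            rw [hBfeq]; exact ENNReal.toReal_one
          rw [hBft]
          have hz : (1 - (1:ℝ)) /
              (∫⁻ η in sphere x (appRad ψ g x).toReal, ENNReal.ofReal (1 - f x η) ∂ψ).toReal = 0 := by
            simp
          rw [hz]
          nlinarith [hfg ξ]
        · -- both else: constants are 1
          nlinarith [hfg ξ]
      nlinarith [hkey]
  · -- hc : appRad f < D : LHS = 0
    unfold appFun
    rw [if_neg (not_lt.2 hc.le), if_neg (ne_of_gt hc)]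
    exact appFun_nonneg hψ hg0 ξ

end GSaux3

namespace GSaux4
open GSaux GSaux2 GSaux3 Bornology

variable {d : ℕ}

lemma rejFun_mono {φ : Measure (Rd d)} (hφ : LocFin φ) {A A' : Rd d → Rd d → ℝ} {ξ : Rd d}
    (h0 : ∀ x, 0 ≤ A x ξ) (hAA : ∀ x, A x ξ ≤ A' x ξ) (h1 : ∀ x, A' x ξ ≤ 1) (x : Rd d) :
    rejFun φ A x ξ ≤ rejFun φ A' x ξ := by
  have hA1 : ∀ x, A x ξ ≤ 1 := fun x => (hAA x).trans (h1 x)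
  have h0' : ∀ x, 0 ≤ A' x ξ := fun x => (h0 x).trans (hAA x)
  have hFA : ∀ x, ENNReal.ofReal (A x ξ) ≤ 1 := fun x => ENNReal.ofReal_le_one.2 (hA1 x)
  have hFA' : ∀ x, ENNReal.ofReal (A' x ξ) ≤ 1 := fun x => ENNReal.ofReal_le_one.2 (h1 x)
  have hle : ∀ x, ENNReal.ofReal (A x ξ) ≤ ENNReal.ofReal (A' x ξ) := fun x =>
    ENNReal.ofReal_le_ofReal (hAA x)
  have hrad : rejRad φ A' ξ ≤ rejRad φ A ξ := rejRad_anti hAA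
  rcases lt_trichotomy (ENNReal.ofReal (dist x ξ)) (rejRad φ A' ξ) with hc | hc | hc
  · unfold rejFun
    rw [if_pos (hc.trans_le hrad), if_pos hc]
  · -- hc : D = rejRad A'
    have hne' : rejRad φ A' ξ ≠ ⊤ := by rw [← hc]; exact ENNReal.ofReal_ne_top
    obtain ⟨hc'0, hc'1⟩ := rejC_mem hφ h1 hne'
    rcases (hc.le.trans hrad).lt_or_eq with hc2 | hc2
    · -- D < rejRad A : LHS = 0
      unfold rejFun
      rw [if_pos hc2, if_neg (by rw [hc]; exact lt_irrefl _), if_pos hc]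
      exact mul_nonneg hc'0 (h0' x)
    · -- D = rejRad A : boundary on both sides
      have hne : rejRad φ A ξ ≠ ⊤ := by rw [← hc2]; exact ENNReal.ofReal_ne_top
      obtain ⟨hcA0, hcA1⟩ := rejC_mem hφ hA1 hne
      have haa : rejRad φ A ξ = rejRad φ A' ξ := hc2.symm.trans hc
      unfold rejFun
      rw [if_neg (by rw [hc2]; exact lt_irrefl _), if_pos hc2,
          if_neg (by rw [hc]; exact lt_irrefl _), if_pos hc]
      have hkey : rejC φ A ξ ≤ rejC φ A' ξ := by
        have hBle : (∫⁻ y in ball ξ (rejRad φ A' ξ).toReal, ENNReal.ofReal (A y ξ) ∂φ)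
            ≤ ∫⁻ y in ball ξ (rejRad φ A' ξ).toReal, ENNReal.ofReal (A' y ξ) ∂φ :=
          lintegral_mono fun y => hle y
        have hSle : (∫⁻ y in sphere ξ (rejRad φ A' ξ).toReal, ENNReal.ofReal (A y ξ) ∂φ)
            ≤ ∫⁻ y in sphere ξ (rejRad φ A' ξ).toReal, ENNReal.ofReal (A' y ξ) ∂φ :=
          lintegral_mono fun y => hle y
        have hBfin : (∫⁻ y in ball ξ (rejRad φ A' ξ).toReal, ENNReal.ofReal (A y ξ) ∂φ) ≠ ⊤ :=
          lint_ne_top hφ hFA isBounded_ball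
        have hSfin : (∫⁻ y in sphere ξ (rejRad φ A' ξ).toReal, ENNReal.ofReal (A y ξ) ∂φ) ≠ ⊤ :=
          lint_ne_top hφ hFA isBounded_sphere'
        have hB'fin : (∫⁻ y in ball ξ (rejRad φ A' ξ).toReal, ENNReal.ofReal (A' y ξ) ∂φ) ≠ ⊤ :=
          lint_ne_top hφ hFA' isBounded_ball
        have hS'fin : (∫⁻ y in sphere ξ (rejRad φ A' ξ).toReal, ENNReal.ofReal (A' y ξ) ∂φ) ≠ ⊤ :=
          lint_ne_top hφ hFA' isBounded_sphere'
        have hB'1 : (∫⁻ y in ball ξ (rejRad φ A' ξ).toReal, ENNReal.ofReal (A' y ξ) ∂φ) ≤ 1 :=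
          ball_le_one hφ hFA' hne'
        have hB1 : (∫⁻ y in ball ξ (rejRad φ A' ξ).toReal, ENNReal.ofReal (A y ξ) ∂φ) ≤ 1 :=
          hBle.trans hB'1
        have hcbA : (1:ℝ≥0∞) ≤ (∫⁻ y in ball ξ (rejRad φ A' ξ).toReal, ENNReal.ofReal (A y ξ) ∂φ)
            + ∫⁻ y in sphere ξ (rejRad φ A' ξ).toReal, ENNReal.ofReal (A y ξ) ∂φ := by
          rw [← cb_split, ← haa]
          exact one_le_closedBall hφ hFA hne
        unfold rejC
        rw [haa]
        split_ifs with hP hP' hP'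
        · -- both main
          have hSpos := hP.2
          have hS'pos := hP'.2
          set B := (∫⁻ y in ball ξ (rejRad φ A' ξ).toReal, ENNReal.ofReal (A y ξ) ∂φ) with hBd
          set S := (∫⁻ y in sphere ξ (rejRad φ A' ξ).toReal, ENNReal.ofReal (A y ξ) ∂φ) with hSd
          set B' := (∫⁻ y in ball ξ (rejRad φ A' ξ).toReal, ENNReal.ofReal (A' y ξ) ∂φ) with hB'd
          set S' := (∫⁻ y in sphere ξ (rejRad φ A' ξ).toReal, ENNReal.ofReal (A' y ξ) ∂φ) with hS'd
          have hSt : 0 < S.toReal := ENNReal.toReal_pos hSpos.ne' hSfin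
          have hS't : 0 < S'.toReal := ENNReal.toReal_pos hS'pos.ne' hS'fin
          have hBt : B.toReal ≤ B'.toReal := ENNReal.toReal_mono hB'fin hBle
          have hStle : S.toReal ≤ S'.toReal := ENNReal.toReal_mono hS'fin hSle
          have hB't1 : B'.toReal ≤ 1 := by
            have := ENNReal.toReal_mono ENNReal.one_ne_top hB'1
            rwa [ENNReal.toReal_one] at this
          have hdiv : (1 - B'.toReal) / S'.toReal ≤ (1 - B.toReal) / S.toReal := by
            rw [div_le_div_iff₀ hS't hSt]
            nlinarith [mul_nonneg (by linarith : (0:ℝ) ≤ 1 - B'.toReal)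
              (by linarith : (0:ℝ) ≤ S'.toReal - S.toReal)]
          linarith
        · -- A main, A' else: contradiction 0 < S ≤ S' = 0
          exfalso
          have hS'0 : (∫⁻ y in sphere ξ (rejRad φ A' ξ).toReal, ENNReal.ofReal (A' y ξ) ∂φ) = 0 := by
            have hnl : ¬ 0 < (∫⁻ y in sphere ξ (rejRad φ A' ξ).toReal, ENNReal.ofReal (A' y ξ) ∂φ) :=
              fun h => hP' ⟨hne', h⟩
            exact le_zero_iff.1 (not_lt.1 hnl)
          exact absurd (le_zero_iff.1 (hS'0 ▸ hSle)) hP.2.ne'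
        · -- A else, A' main : 0 ≤ c'
          have hS'pos := hP'.2
          have hS't : 0 < (∫⁻ y in sphere ξ (rejRad φ A' ξ).toReal, ENNReal.ofReal (A' y ξ) ∂φ).toReal :=
            ENNReal.toReal_pos hS'pos.ne' hS'fin
          have hB't1 : (∫⁻ y in ball ξ (rejRad φ A' ξ).toReal, ENNReal.ofReal (A' y ξ) ∂φ).toReal ≤ 1 := by
            have := ENNReal.toReal_mono ENNReal.one_ne_top hB'1
            rwa [ENNReal.toReal_one] at this
          have : (1 - (∫⁻ y in ball ξ (rejRad φ A' ξ).toReal, ENNReal.ofReal (A' y ξ) ∂φ).toReal) /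
              (∫⁻ y in sphere ξ (rejRad φ A' ξ).toReal, ENNReal.ofReal (A' y ξ) ∂φ).toReal ≤ 1 := by
            rw [div_le_one hS't]
            -- need 1 ≤ B' + S' in reals
            have hcbA' : (1:ℝ≥0∞) ≤ (∫⁻ y in ball ξ (rejRad φ A' ξ).toReal, ENNReal.ofReal (A' y ξ) ∂φ)
                + ∫⁻ y in sphere ξ (rejRad φ A' ξ).toReal, ENNReal.ofReal (A' y ξ) ∂φ := by
              rw [← cb_split]
              exact one_le_closedBall hφ hFA' hne'
            have := ENNReal.toReal_mono (ENNReal.add_ne_top.2 ⟨hB'fin, hS'fin⟩) hcbA'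
            rw [ENNReal.toReal_one, ENNReal.toReal_add hB'fin hS'fin] at this
            linarith
          linarith
        · exact le_rfl
      calc rejC φ A ξ * A x ξ ≤ rejC φ A' ξ * A x ξ :=
            mul_le_mul_of_nonneg_right hkey (h0 x)
        _ ≤ rejC φ A' ξ * A' x ξ := mul_le_mul_of_nonneg_left (hAA x) hc'0
  · -- hc : rejRad A' < D : RHS = A'
    unfold rejFun
    rw [if_neg (not_lt.2 hc.le), if_neg (ne_of_gt hc)]
    calc (if ENNReal.ofReal (dist x ξ) < rejRad φ A ξ then 0
          else if ENNReal.ofReal (dist x ξ) = rejRad φ A ξ then rejC φ A ξ * A x ξ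
          else A x ξ) = rejFun φ A x ξ := rfl
      _ ≤ A x ξ := rejFun_le hφ h0 hA1 x
      _ ≤ A' x ξ := hAA x

end GSaux4

namespace GSfinal
open GSaux GSaux2 GSaux3 GSaux4 Bornology

variable {d : ℕ}

lemma R_bounds {φ ψ : Measure (Rd d)} (hφ : LocFin φ) (hψ : LocFin ψ) (n : ℕ) :
    ∀ x ξ, 0 ≤ GS_R φ ψ n x ξ ∧ GS_R φ ψ n x ξ ≤ 1 := by
  induction n with
  | zero => intro x ξ; exact ⟨le_rfl, zero_le_one⟩
  | succ n ih =>
    intro x ξ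
    have hA0 : ∀ x' ξ', 0 ≤ appFun ψ (GS_R φ ψ n) x' ξ' := fun x' ξ' =>
      appFun_nonneg hψ (fun η => (ih x' η).1) ξ'
    have hA1 : ∀ x' ξ', appFun ψ (GS_R φ ψ n) x' ξ' ≤ 1 := fun x' ξ' =>
      appFun_le_one hψ (fun η => (ih x' η).1) (fun η => (ih x' η).2) ξ'
    constructor
    · exact rejFun_nonneg hφ (fun x' => hA0 x' ξ) (fun x' => hA1 x' ξ) x
    · exact (rejFun_le hφ (fun x' => hA0 x' ξ) (fun x' => hA1 x' ξ) x).trans (hA1 x ξ)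

lemma R_mono {φ ψ : Measure (Rd d)} (hφ : LocFin φ) (hψ : LocFin ψ) (n : ℕ) :
    ∀ x ξ, GS_R φ ψ n x ξ ≤ GS_R φ ψ (n + 1) x ξ := by
  induction n with
  | zero =>
    intro x ξ
    have hA0 : ∀ x' ξ', 0 ≤ appFun ψ (GS_R φ ψ 0) x' ξ' := fun x' ξ' =>
      appFun_nonneg hψ (fun η => (R_bounds hφ hψ 0 x' η).1) ξ'
    have hA1 : ∀ x' ξ', appFun ψ (GS_R φ ψ 0) x' ξ' ≤ 1 := fun x' ξ' =>
      appFun_le_one hψ (fun η => (R_bounds hφ hψ 0 x' η).1)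
        (fun η => (R_bounds hφ hψ 0 x' η).2) ξ'
    exact rejFun_nonneg hφ (fun x' => hA0 x' ξ) (fun x' => hA1 x' ξ) x
  | succ n ih =>
    intro x ξ
    show rejFun φ (appFun ψ (GS_R φ ψ n)) x ξ ≤ rejFun φ (appFun ψ (GS_R φ ψ (n + 1))) x ξ
    refine rejFun_mono hφ ?_ ?_ ?_ x
    · exact fun x' => appFun_nonneg hψ (fun η => (R_bounds hφ hψ n x' η).1) ξ
    · exact fun x' => appFun_mono hψ (fun η => (R_bounds hφ hψ n x' η).1)
        (fun η => ih x' η) (fun η => (R_bounds hφ hψ (n + 1) x' η).2) ξ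
    · exact fun x' => appFun_le_one hψ (fun η => (R_bounds hφ hψ (n + 1) x' η).1)
        (fun η => (R_bounds hφ hψ (n + 1) x' η).2) ξ

lemma A_mono {φ ψ : Measure (Rd d)} (hφ : LocFin φ) (hψ : LocFin ψ) (n : ℕ) (x ξ : Rd d) :
    GS_A φ ψ n x ξ ≤ GS_A φ ψ (n + 1) x ξ :=
  appFun_mono hψ (fun η => (R_bounds hφ hψ n x η).1) (fun η => R_mono hφ hψ n x η)
    (fun η => (R_bounds hφ hψ (n + 1) x η).2) ξ

lemma A_bounds {φ ψ : Measure (Rd d)} (hφ : LocFin φ) (hψ : LocFin ψ) (n : ℕ) (x ξ : Rd d) :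
    0 ≤ GS_A φ ψ n x ξ ∧ GS_A φ ψ n x ξ ≤ 1 :=
  ⟨appFun_nonneg hψ (fun η => (R_bounds hφ hψ n x η).1) ξ,
   appFun_le_one hψ (fun η => (R_bounds hφ hψ n x η).1)
     (fun η => (R_bounds hφ hψ n x η).2) ξ⟩

end GSfinal


/-- Monotonicity of the Gale–Shapley quantities and existence of the
limits `A` and `R` with values in `[0,1]`.  (Here `GS_a φ ψ n = aₙ₊₁`, `GS_A φ ψ n = Aₙ₊₁`,
`GS_r φ ψ n = rₙ₊₁` and `GS_R φ ψ n = Rₙ`.) -/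
theorem stmt1 {d : ℕ} (φ ψ : Measure (Rd d)) (hφ : LocFin φ) (hψ : LocFin ψ) :
    (∀ (n : ℕ) (x : Rd d), GS_a φ ψ n x ≤ GS_a φ ψ (n + 1) x) ∧
    (∀ (n : ℕ) (x ξ : Rd d), GS_A φ ψ n x ξ ≤ GS_A φ ψ (n + 1) x ξ) ∧
    (∀ (n : ℕ) (ξ : Rd d), GS_r φ ψ (n + 1) ξ ≤ GS_r φ ψ n ξ) ∧
    (∀ (n : ℕ) (x ξ : Rd d), GS_R φ ψ n x ξ ≤ GS_R φ ψ (n + 1) x ξ) ∧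
    (∀ x ξ : Rd d, ∃ L ∈ Set.Icc (0 : ℝ) 1,
      Tendsto (fun n => GS_A φ ψ n x ξ) atTop (𝓝 L)) ∧
    (∀ x ξ : Rd d, ∃ L ∈ Set.Icc (0 : ℝ) 1,
      Tendsto (fun n => GS_R φ ψ n x ξ) atTop (𝓝 L)) := by
  refine ⟨?_, ?_, ?_, ?_, ?_, ?_⟩
  · exact fun n x => GSaux3.appRad_mono (fun η => GSfinal.R_mono hφ hψ n x η)
  · exact fun n x ξ => GSfinal.A_mono hφ hψ n x ξ
  · exact fun n ξ => GSaux3.rejRad_anti (fun x => GSfinal.A_mono hφ hψ n x ξ)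
  · exact fun n x ξ => GSfinal.R_mono hφ hψ n x ξ
  · intro x ξ
    have hmono : Monotone fun n => GS_A φ ψ n x ξ :=
      monotone_nat_of_le_succ fun n => GSfinal.A_mono hφ hψ n x ξ
    have hbdd : BddAbove (Set.range fun n => GS_A φ ψ n x ξ) := by
      refine ⟨1, ?_⟩
      rintro _ ⟨n, rfl⟩
      exact (GSfinal.A_bounds hφ hψ n x ξ).2
    refine ⟨⨆ n, GS_A φ ψ n x ξ, ⟨?_, ?_⟩, tendsto_atTop_ciSup hmono hbdd⟩
    · exact (GSfinal.A_bounds hφ hψ 0 x ξ).1.trans (le_ciSup hbdd 0)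
    · exact ciSup_le fun n => (GSfinal.A_bounds hφ hψ n x ξ).2
  · intro x ξ
    have hmono : Monotone fun n => GS_R φ ψ n x ξ :=
      monotone_nat_of_le_succ fun n => GSfinal.R_mono hφ hψ n x ξ
    have hbdd : BddAbove (Set.range fun n => GS_R φ ψ n x ξ) := by
      refine ⟨1, ?_⟩
      rintro _ ⟨n, rfl⟩
      exact (GSfinal.R_bounds hφ hψ n x ξ).2
    refine ⟨⨆ n, GS_R φ ψ n x ξ, ⟨?_, ?_⟩, tendsto_atTop_ciSup hmono hbdd⟩
    · exact (GSfinal.R_bounds hφ hψ 0 x ξ).1.trans (le_ciSup hbdd 0)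
    · exact ciSup_le fun n => (GSfinal.R_bounds hφ hψ n x ξ).2
end
end

section
/- The site-optimal density f_s for (φ,ψ) is a stable constrained density for (φ,ψ). -/
open MeasureTheory Filter Metric Bornology
open scoped ENNReal NNReal Topology

noncomputable section

attribute [local instance] Classical.propDecidable

namespace GSP
open Set Function
variable {d : ℕ}

theorem locFin_sigmaFinite {μ : Measure (Rd d)} (hμ : LocFin μ) : SigmaFinite μ :=
  ⟨⟨⟨fun n => closedBall 0 n, fun _ => trivial,
     fun n => hμ _ isBounded_closedBall, iUnion_closedBall_nat 0⟩⟩⟩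

def rad (μ : Measure (Rd d)) (k : Rd d → ℝ≥0∞) (c : Rd d) : ℝ≥0∞ :=
  sSup (ENNReal.ofReal '' {a : ℝ | 0 ≤ a ∧ ∫⁻ y in closedBall c a, k y ∂μ ≤ 1})

section RadFacts
variable {μ : Measure (Rd d)} {k : Rd d → ℝ≥0∞} {c : Rd d}

theorem nu_mono {s t : Set (Rd d)} (h : s ⊆ t) :
    μ.withDensity k s ≤ μ.withDensity k t := measure_mono h

theorem nu_ball (hk : Measurable k) (x : Rd d) (r : ℝ) :
    μ.withDensity k (ball x r) = ∫⁻ y in ball x r, k y ∂μ :=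
  withDensity_apply k measurableSet_ball

theorem nu_sphere (hk : Measurable k) (x : Rd d) (r : ℝ) :
    μ.withDensity k (sphere x r) = ∫⁻ y in sphere x r, k y ∂μ :=
  withDensity_apply k isClosed_sphere.measurableSet

theorem nu_cb (hk : Measurable k) (x : Rd d) (r : ℝ) :
    μ.withDensity k (closedBall x r) = ∫⁻ y in closedBall x r, k y ∂μ :=
  withDensity_apply k measurableSet_closedBall

theorem nu_le_mu (hk1 : ∀ y, k y ≤ 1) {s : Set (Rd d)} (hs : MeasurableSet s) :
    μ.withDensity k s ≤ μ s := by
  rw [withDensity_apply k hs]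
  calc ∫⁻ y in s, k y ∂μ ≤ ∫⁻ y in s, 1 ∂μ := lintegral_mono hk1
  _ = μ s := by simp

theorem nu_fin (hμ : LocFin μ) (hk1 : ∀ y, k y ≤ 1)
    {s : Set (Rd d)} (hs : MeasurableSet s) (hb : IsBounded s) :
    μ.withDensity k s < ⊤ :=
  lt_of_le_of_lt (nu_le_mu hk1 hs) (hμ s hb)

theorem mem_le_rad (hk : Measurable k) {a : ℝ} (ha : 0 ≤ a)
    (h : μ.withDensity k (closedBall c a) ≤ 1) : ENNReal.ofReal a ≤ rad μ k c := by
  refine le_sSup ⟨a, ⟨ha, ?_⟩, rfl⟩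
  rwa [nu_cb hk] at h

theorem cb_le_one_of_lt_rad (hk : Measurable k) {a : ℝ} (ha : 0 ≤ a)
    (h : ENNReal.ofReal a < rad μ k c) : μ.withDensity k (closedBall c a) ≤ 1 := by
  obtain ⟨y, ⟨a', ⟨ha', hIa⟩, rfl⟩, hlt⟩ := lt_sSup_iff.mp h
  have haa : a ≤ a' := ((ENNReal.ofReal_lt_ofReal_iff_of_nonneg ha).mp hlt).le
  calc μ.withDensity k (closedBall c a) ≤ μ.withDensity k (closedBall c a') :=
        nu_mono (closedBall_subset_closedBall haa)
  _ ≤ 1 := by rw [nu_cb hk]; exact hIa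

theorem one_lt_cb_of_rad_lt (hk : Measurable k) {a : ℝ} (ha : 0 ≤ a)
    (h : rad μ k c < ENNReal.ofReal a) : 1 < μ.withDensity k (closedBall c a) := by
  by_contra hc
  push_neg at hc
  exact absurd (mem_le_rad hk ha hc) (not_le.mpr h)

theorem ball_le_one (hk : Measurable k) :
    μ.withDensity k (ball c (rad μ k c).toReal) ≤ 1 := by
  set t := (rad μ k c).toReal with ht
  rcases le_or_gt t 0 with h0 | h0
  · rw [ball_eq_empty.mpr h0]; simp
  · have hne : rad μ k c ≠ ⊤ := by
      intro hT; rw [hT] at ht; simp [ht] at h0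
    have hball : ball c t = ⋃ n : ℕ, closedBall c (t - t / (n + 1)) := by
      ext y
      simp only [mem_ball, mem_iUnion, mem_closedBall]
      constructor
      · intro hy
        have hpos : 0 < t - dist y c := by linarith
        obtain ⟨n, hn⟩ := exists_nat_gt (t / (t - dist y c))
        refine ⟨n, ?_⟩
        have h1 : t / (n + 1 : ℝ) ≤ t - dist y c := by
          rw [div_le_iff₀ (by positivity)]
          have h2 : t / (t - dist y c) * (t - dist y c) = t :=
            div_mul_cancel₀ _ (ne_of_gt hpos)
          nlinarith [hn, hpos]
        linarith
      · rintro ⟨n, hn⟩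
        have : 0 < t / (n + 1 : ℝ) := by positivity
        linarith
    rw [hball]
    have hmono : Monotone fun n : ℕ => closedBall c (t - t / (n + 1)) := by
      intro m n hmn
      apply closedBall_subset_closedBall
      have hmn' : (m:ℝ) ≤ n := Nat.cast_le.mpr hmn
      have : t / (n + 1 : ℝ) ≤ t / (m + 1 : ℝ) :=
        div_le_div_of_nonneg_left h0.le (by positivity) (by linarith)
      linarith
    rw [hmono.directed_le.measure_iUnion]
    refine iSup_le fun n => ?_
    have hge : (0:ℝ) ≤ t - t / (n + 1) := by
      have : t / (n + 1 : ℝ) ≤ t := by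
        apply div_le_self h0.le
        simp
      linarith
    apply cb_le_one_of_lt_rad hk hge
    calc ENNReal.ofReal (t - t / (n + 1)) < ENNReal.ofReal t := by
          rw [ENNReal.ofReal_lt_ofReal_iff h0]
          have : 0 < t / (n + 1 : ℝ) := by positivity
          linarith
    _ = rad μ k c := ENNReal.ofReal_toReal hne

theorem one_le_cb (hμ : LocFin μ) (hk1 : ∀ y, k y ≤ 1) (hk : Measurable k)
    (hne : rad μ k c ≠ ⊤) :
    1 ≤ μ.withDensity k (closedBall c (rad μ k c).toReal) := by
  set t := (rad μ k c).toReal with ht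
  have hcb : closedBall c t = ⋂ n : ℕ, closedBall c (t + 1 / (n + 1)) := by
    ext y
    simp only [mem_closedBall, mem_iInter]
    constructor
    · intro hy n
      have : (0:ℝ) < 1 / (n + 1) := by positivity
      linarith
    · intro h
      by_contra hc
      push_neg at hc
      obtain ⟨n, hn⟩ := exists_nat_gt (1 / (dist y c - t))
      have hpos : 0 < dist y c - t := by linarith
      have h2 : 1 / (n + 1 : ℝ) < dist y c - t := by
        rw [div_lt_iff₀ (by positivity)]
        have h3 : 1 / (dist y c - t) * (dist y c - t) = 1 :=
          div_mul_cancel₀ _ (ne_of_gt hpos)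
        nlinarith [hn, hpos]
      have := h n
      linarith
  rw [hcb]
  have hanti : Antitone fun n : ℕ => closedBall c (t + 1 / (n + 1)) := by
    intro m n hmn
    apply closedBall_subset_closedBall
    have hmn' : (m:ℝ) ≤ n := Nat.cast_le.mpr hmn
    have : 1 / (n + 1 : ℝ) ≤ 1 / (m + 1 : ℝ) :=
      div_le_div_of_nonneg_left one_pos.le (by positivity) (by linarith)
    linarith
  rw [Directed.measure_iInter (fun n => measurableSet_closedBall.nullMeasurableSet)
    hanti.directed_ge ⟨0, (nu_fin hμ hk1 measurableSet_closedBall isBounded_closedBall).ne⟩]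
  refine le_iInf fun n => ?_
  have ht0 : 0 ≤ t := ENNReal.toReal_nonneg
  refine (one_lt_cb_of_rad_lt hk (by positivity) ?_).le
  calc rad μ k c = ENNReal.ofReal t := (ENNReal.ofReal_toReal hne).symm
  _ < ENNReal.ofReal (t + 1 / (n + 1)) := by
      rw [ENNReal.ofReal_lt_ofReal_iff (by positivity)]
      have : (0:ℝ) < 1 / (n + 1) := by positivity
      linarith

theorem univ_le_one (hk : Measurable k) (htop : rad μ k c = ⊤) :
    μ.withDensity k univ ≤ 1 := by
  have huniv : (univ : Set (Rd d)) = ⋃ n : ℕ, closedBall c n := (iUnion_closedBall_nat c).symm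
  rw [huniv]
  have hmono : Monotone fun n : ℕ => closedBall c (n : ℝ) := fun m n hmn =>
    closedBall_subset_closedBall (by exact_mod_cast hmn)
  rw [hmono.directed_le.measure_iUnion]
  refine iSup_le fun n => cb_le_one_of_lt_rad hk (Nat.cast_nonneg n) ?_
  rw [htop]
  exact ENNReal.ofReal_lt_top

theorem rad_anti {k' : Rd d → ℝ≥0∞} (h : ∀ y, k y ≤ k' y) : rad μ k' c ≤ rad μ k c := by
  apply sSup_le_sSup
  apply image_mono
  rintro a ⟨ha, hIa⟩
  exact ⟨ha, le_trans (lintegral_mono h) hIa⟩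

end RadFacts


/-- disjointness of ball and sphere -/
theorem ball_disj_sphere (x : Rd d) (r : ℝ) : Disjoint (ball x r) (sphere x r) := by
  rw [Set.disjoint_left]
  intro a ha hs
  exact absurd (mem_sphere.mp hs) (ne_of_lt (mem_ball.mp ha))

theorem nu_cb_split {μ : Measure (Rd d)} {k : Rd d → ℝ≥0∞} (x : Rd d) (r : ℝ) :
    μ.withDensity k (closedBall x r) =
      μ.withDensity k (ball x r) + μ.withDensity k (sphere x r) := by
  rw [← ball_union_sphere]
  exact measure_union (ball_disj_sphere x r) isClosed_sphere.measurableSet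

theorem one_le_add_toReal {b s : ℝ≥0∞} (hb : b ≠ ⊤) (hs : s ≠ ⊤) (h : 1 ≤ b + s) :
    1 ≤ b.toReal + s.toReal := by
  have := ENNReal.toReal_mono (by finiteness) h
  rwa [ENNReal.toReal_one, ENNReal.toReal_add hb hs] at this

section AppFacts
variable {ψ : Measure (Rd d)} {Rp : Rd d → Rd d → ℝ} {x : Rd d}

theorem appRad_eq : appRad ψ Rp x = rad ψ (fun ξ => ENNReal.ofReal (1 - Rp x ξ)) x := rfl

theorem kA_meas (hm : Measurable (Rp x)) :
    Measurable (fun ξ => ENNReal.ofReal (1 - Rp x ξ)) :=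
  (measurable_const.sub hm).ennreal_ofReal

theorem kA_le_one (h0 : ∀ ξ, 0 ≤ Rp x ξ) :
    ∀ ξ, ENNReal.ofReal (1 - Rp x ξ) ≤ 1 := fun ξ => by
  calc ENNReal.ofReal (1 - Rp x ξ) ≤ ENNReal.ofReal 1 :=
    ENNReal.ofReal_le_ofReal (by linarith [h0 ξ])
  _ = 1 := ENNReal.ofReal_one

theorem app_sphere_int (hm : Measurable (Rp x)) (r : ℝ) :
    (∫⁻ ξ in sphere x r, ENNReal.ofReal (1 - Rp x ξ) ∂ψ) =
      ψ.withDensity (fun ξ => ENNReal.ofReal (1 - Rp x ξ)) (sphere x r) :=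
  (nu_sphere (kA_meas hm) x r).symm

theorem app_ball_int (hm : Measurable (Rp x)) (r : ℝ) :
    (∫⁻ ξ in ball x r, ENNReal.ofReal (1 - Rp x ξ) ∂ψ) =
      ψ.withDensity (fun ξ => ENNReal.ofReal (1 - Rp x ξ)) (ball x r) :=
  (nu_ball (kA_meas hm) x r).symm

theorem app_btr_le_one (hm : Measurable (Rp x)) :
    (ψ.withDensity (fun ξ => ENNReal.ofReal (1 - Rp x ξ))
      (ball x (appRad ψ Rp x).toReal)).toReal ≤ 1 := by
  have hb : ψ.withDensity (fun ξ => ENNReal.ofReal (1 - Rp x ξ))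
      (ball x (appRad ψ Rp x).toReal) ≤ 1 := ball_le_one (kA_meas hm)
  have := ENNReal.toReal_mono ENNReal.one_ne_top hb
  simpa using this

theorem appC_le_one (hψ : LocFin ψ) (hm : Measurable (Rp x)) (h0 : ∀ ξ, 0 ≤ Rp x ξ) :
    appC ψ Rp x ≤ 1 := by
  unfold appC
  split_ifs with h
  · obtain ⟨hne, hs⟩ := h
    rw [app_sphere_int hm, app_ball_int hm] at *
    have hsfin : ψ.withDensity (fun ξ => ENNReal.ofReal (1 - Rp x ξ))
        (sphere x (appRad ψ Rp x).toReal) ≠ ⊤ :=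
      (nu_fin hψ (kA_le_one h0) isClosed_sphere.measurableSet isBounded_sphere).ne
    have hstr : 0 < (ψ.withDensity (fun ξ => ENNReal.ofReal (1 - Rp x ξ))
        (sphere x (appRad ψ Rp x).toReal)).toReal :=
      ENNReal.toReal_pos (ne_of_gt hs) hsfin
    have := app_btr_le_one (ψ := ψ) hm
    have : 0 ≤ (1 - (ψ.withDensity (fun ξ => ENNReal.ofReal (1 - Rp x ξ))
        (ball x (appRad ψ Rp x).toReal)).toReal) /
        (ψ.withDensity (fun ξ => ENNReal.ofReal (1 - Rp x ξ))
          (sphere x (appRad ψ Rp x).toReal)).toReal := div_nonneg (by linarith) hstr.le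
    linarith
  · exact le_refl 1

theorem appC_nonneg (hψ : LocFin ψ) (hm : Measurable (Rp x)) (h0 : ∀ ξ, 0 ≤ Rp x ξ) :
    0 ≤ appC ψ Rp x := by
  unfold appC
  split_ifs with h
  · obtain ⟨hne, hs⟩ := h
    rw [app_sphere_int hm, app_ball_int hm] at *
    set ν := ψ.withDensity (fun ξ => ENNReal.ofReal (1 - Rp x ξ)) with hν
    set t := (appRad ψ Rp x).toReal with htdef
    have hsfin : ν (sphere x t) ≠ ⊤ :=
      (nu_fin hψ (kA_le_one h0) isClosed_sphere.measurableSet isBounded_sphere).ne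
    have hbfin : ν (ball x t) ≠ ⊤ :=
      (nu_fin hψ (kA_le_one h0) measurableSet_ball isBounded_ball).ne
    have hstr : 0 < (ν (sphere x t)).toReal := ENNReal.toReal_pos (ne_of_gt hs) hsfin
    have hcb : (1:ℝ≥0∞) ≤ ν (closedBall x t) := one_le_cb hψ (kA_le_one h0) (kA_meas hm) hne
    rw [nu_cb_split x t] at hcb
    have h1 : 1 ≤ (ν (ball x t)).toReal + (ν (sphere x t)).toReal :=
      one_le_add_toReal hbfin hsfin hcb
    have h2 : (1 - (ν (ball x t)).toReal) / (ν (sphere x t)).toReal ≤ 1 := by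
      rw [div_le_one hstr]; linarith
    linarith
  · norm_num

theorem appFun_nonneg (hψ : LocFin ψ) (hm : Measurable (Rp x)) (h0 : ∀ ξ, 0 ≤ Rp x ξ)
    (h1 : ∀ ξ, Rp x ξ ≤ 1) (ξ : Rd d) : 0 ≤ appFun ψ Rp x ξ := by
  unfold appFun
  split_ifs with hlt heq
  · norm_num
  · have hc0 := appC_nonneg hψ hm h0
    have hc1 := appC_le_one hψ hm h0
    nlinarith [h0 ξ, h1 ξ]
  · exact le_refl 0

theorem appFun_le_one (hψ : LocFin ψ) (hm : Measurable (Rp x)) (h0 : ∀ ξ, 0 ≤ Rp x ξ)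
    (h1 : ∀ ξ, Rp x ξ ≤ 1) (ξ : Rd d) : appFun ψ Rp x ξ ≤ 1 := by
  unfold appFun
  split_ifs with hlt heq
  · exact le_refl 1
  · have hc0 := appC_nonneg hψ hm h0
    nlinarith [h0 ξ, h1 ξ]
  · norm_num

theorem appFun_eq_one (h : ENNReal.ofReal (dist x ξ) < appRad ψ Rp x) :
    appFun ψ Rp x ξ = 1 := if_pos h

theorem appFun_eq_zero {ξ : Rd d} (h : appRad ψ Rp x < ENNReal.ofReal (dist x ξ)) :
    appFun ψ Rp x ξ = 0 := by
  unfold appFun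
  rw [if_neg (by exact not_lt.mpr h.le), if_neg (by exact fun he => absurd he (ne_of_gt h))]

theorem le_appRad_of_ne {ξ : Rd d} (h : appFun ψ Rp x ξ ≠ 0) :
    ENNReal.ofReal (dist x ξ) ≤ appRad ψ Rp x := by
  by_contra hc
  exact h (appFun_eq_zero (not_le.mp hc))

/-- The key exactness identity for the application step. -/
theorem app_lint_eq (hψ : LocFin ψ) (hm : Measurable (Rp x)) (h0 : ∀ ξ, 0 ≤ Rp x ξ)
    (hne : appRad ψ Rp x ≠ ⊤) :
    (∫⁻ ξ, ENNReal.ofReal (appFun ψ Rp x ξ - Rp x ξ) ∂ψ) = 1 := by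
  set k := fun ξ => ENNReal.ofReal (1 - Rp x ξ) with hkdef
  have hk : Measurable k := kA_meas hm
  have hk1 : ∀ ξ, k ξ ≤ 1 := kA_le_one h0
  set t := (appRad ψ Rp x).toReal with htdef
  set cv := appC ψ Rp x with hcv
  have hc1 : cv ≤ 1 := appC_le_one hψ hm h0
  have hpt : ∀ ξ, ENNReal.ofReal (appFun ψ Rp x ξ - Rp x ξ) =
      (ball x t).indicator k ξ +
      (sphere x t).indicator (fun ξ => ENNReal.ofReal (1 - cv) * k ξ) ξ := by
    intro ξ
    have hballm : ξ ∈ ball x t ↔ ENNReal.ofReal (dist x ξ) < appRad ψ Rp x := by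
      rw [mem_ball, dist_comm]
      exact (ENNReal.ofReal_lt_iff_lt_toReal dist_nonneg hne).symm
    have hspherem : ξ ∈ sphere x t ↔ ENNReal.ofReal (dist x ξ) = appRad ψ Rp x := by
      rw [mem_sphere, dist_comm]
      constructor
      · intro hh; rw [hh, htdef]; exact ENNReal.ofReal_toReal hne
      · intro hh; rw [htdef, ← hh, ENNReal.toReal_ofReal dist_nonneg]
    unfold appFun
    split_ifs with hlt heq
    · rw [Set.indicator_of_mem (hballm.mpr hlt), Set.indicator_of_notMem
        (fun hmem => (ne_of_lt hlt) (hspherem.mp hmem)), add_zero]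
    · rw [Set.indicator_of_notMem (fun hmem => (ne_of_lt (hballm.mp hmem)) heq),
        Set.indicator_of_mem (hspherem.mpr heq), zero_add]
      have harith : cv * Rp x ξ + (1 - cv) - Rp x ξ = (1 - cv) * (1 - Rp x ξ) := by ring
      rw [harith, ENNReal.ofReal_mul (by linarith)]
    · rw [Set.indicator_of_notMem (fun hmem => hlt (hballm.mp hmem)),
        Set.indicator_of_notMem (fun hmem => heq (hspherem.mp hmem)), add_zero]
      exact ENNReal.ofReal_of_nonpos (by linarith [h0 ξ])
  rw [lintegral_congr hpt,
    lintegral_add_left (hk.indicator measurableSet_ball),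
    lintegral_indicator measurableSet_ball,
    lintegral_indicator isClosed_sphere.measurableSet,
    lintegral_const_mul _ hk]
  rw [← nu_ball hk, ← nu_sphere hk]
  have hsfin : ψ.withDensity k (sphere x t) ≠ ⊤ :=
    (nu_fin hψ hk1 isClosed_sphere.measurableSet isBounded_sphere).ne
  have hbfin : ψ.withDensity k (ball x t) ≠ ⊤ :=
    (nu_fin hψ hk1 measurableSet_ball isBounded_ball).ne
  have hble : ψ.withDensity k (ball x t) ≤ 1 := ball_le_one hk
  have hbtr : (ψ.withDensity k (ball x t)).toReal ≤ 1 := by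
    have := ENNReal.toReal_mono ENNReal.one_ne_top hble
    simpa using this
  rcases eq_or_ne (ψ.withDensity k (sphere x t)) 0 with hs0 | hs0
  · have hcv1 : cv = 1 := by
      rw [hcv]; unfold appC
      rw [if_neg]
      push_neg
      intro _
      rw [app_sphere_int hm]
      rw [← htdef] at *
      simp [hkdef ▸ hs0]
    have hge : 1 ≤ ψ.withDensity k (ball x t) := by
      have h2 := one_le_cb hψ hk1 hk hne
      have h3 : rad ψ k x = appRad ψ Rp x := rfl
      rw [h3, ← htdef, nu_cb_split x t, hs0, add_zero] at h2
      exact h2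
    rw [hs0, mul_zero, add_zero]
    exact le_antisymm hble hge
  · have hcond : appRad ψ Rp x ≠ ⊤ ∧
        0 < ∫⁻ ξ in sphere x (appRad ψ Rp x).toReal, ENNReal.ofReal (1 - Rp x ξ) ∂ψ := by
      refine ⟨hne, ?_⟩
      rw [app_sphere_int hm]
      refine pos_iff_ne_zero.mpr ?_
      rw [← htdef]
      exact hs0
    have hcveq : cv = 1 - (1 - (ψ.withDensity k (ball x t)).toReal) /
        (ψ.withDensity k (sphere x t)).toReal := by
      rw [hcv]; unfold appC
      rw [if_pos hcond, app_sphere_int hm, app_ball_int hm, ← htdef]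
    have hstr : 0 < (ψ.withDensity k (sphere x t)).toReal :=
      ENNReal.toReal_pos hs0 hsfin
    have h1c : 1 - cv = (1 - (ψ.withDensity k (ball x t)).toReal) /
        (ψ.withDensity k (sphere x t)).toReal := by rw [hcveq]; ring
    rw [h1c]
    nth_rewrite 2 [show ψ.withDensity k (sphere x t) =
      ENNReal.ofReal (ψ.withDensity k (sphere x t)).toReal from (ENNReal.ofReal_toReal hsfin).symm]
    rw [← ENNReal.ofReal_mul (div_nonneg (by linarith) hstr.le),
      div_mul_cancel₀ _ (ne_of_gt hstr)]
    nth_rewrite 1 [show ψ.withDensity k (ball x t) =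
      ENNReal.ofReal (ψ.withDensity k (ball x t)).toReal from (ENNReal.ofReal_toReal hbfin).symm]
    rw [← ENNReal.ofReal_add ENNReal.toReal_nonneg (by linarith)]
    rw [add_sub_cancel]
    exact ENNReal.ofReal_one

/-- Sub-balancing inequality for the application step (both cases). -/
theorem app_lint_le (hψ : LocFin ψ) (hm : Measurable (Rp x)) (h0 : ∀ ξ, 0 ≤ Rp x ξ) :
    (∫⁻ ξ, ENNReal.ofReal (appFun ψ Rp x ξ - Rp x ξ) ∂ψ) ≤ 1 := by
  rcases eq_or_ne (appRad ψ Rp x) ⊤ with htop | hne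
  · set k := fun ξ => ENNReal.ofReal (1 - Rp x ξ) with hkdef
    have hk : Measurable k := kA_meas hm
    have hpt : ∀ ξ, ENNReal.ofReal (appFun ψ Rp x ξ - Rp x ξ) ≤ k ξ := by
      intro ξ
      have h1 : appFun ψ Rp x ξ = 1 :=
        appFun_eq_one (htop ▸ ENNReal.ofReal_lt_top)
      rw [h1]
    calc (∫⁻ ξ, ENNReal.ofReal (appFun ψ Rp x ξ - Rp x ξ) ∂ψ) ≤ ∫⁻ ξ, k ξ ∂ψ :=
        lintegral_mono hpt
    _ = ψ.withDensity k univ := by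
        rw [withDensity_apply k MeasurableSet.univ, Measure.restrict_univ]
    _ ≤ 1 := univ_le_one hk htop
  · exact (app_lint_eq hψ hm h0 hne).le

end AppFacts



section RejFacts
variable {φ : Measure (Rd d)} {A : Rd d → Rd d → ℝ} {ξ : Rd d}

theorem rejRad_eq : rejRad φ A ξ = rad φ (fun x => ENNReal.ofReal (A x ξ)) ξ := rfl

theorem kR_meas (hm : Measurable (fun x => A x ξ)) :
    Measurable (fun x => ENNReal.ofReal (A x ξ)) := hm.ennreal_ofReal

theorem kR_le_one (h1 : ∀ x, A x ξ ≤ 1) :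
    ∀ x, ENNReal.ofReal (A x ξ) ≤ 1 := fun x => by
  calc ENNReal.ofReal (A x ξ) ≤ ENNReal.ofReal 1 := ENNReal.ofReal_le_ofReal (h1 x)
  _ = 1 := ENNReal.ofReal_one

theorem rej_sphere_int (hm : Measurable (fun x => A x ξ)) (r : ℝ) :
    (∫⁻ x in sphere ξ r, ENNReal.ofReal (A x ξ) ∂φ) =
      φ.withDensity (fun x => ENNReal.ofReal (A x ξ)) (sphere ξ r) :=
  (nu_sphere (kR_meas hm) ξ r).symm

theorem rej_ball_int (hm : Measurable (fun x => A x ξ)) (r : ℝ) :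
    (∫⁻ x in ball ξ r, ENNReal.ofReal (A x ξ) ∂φ) =
      φ.withDensity (fun x => ENNReal.ofReal (A x ξ)) (ball ξ r) :=
  (nu_ball (kR_meas hm) ξ r).symm

theorem rej_btr_le_one (hm : Measurable (fun x => A x ξ)) :
    (φ.withDensity (fun x => ENNReal.ofReal (A x ξ))
      (ball ξ (rejRad φ A ξ).toReal)).toReal ≤ 1 := by
  have hb : φ.withDensity (fun x => ENNReal.ofReal (A x ξ))
      (ball ξ (rejRad φ A ξ).toReal) ≤ 1 := ball_le_one (kR_meas hm)
  have := ENNReal.toReal_mono ENNReal.one_ne_top hb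
  simpa using this

theorem rejC_le_one (hm : Measurable (fun x => A x ξ)) : rejC φ A ξ ≤ 1 := by
  unfold rejC
  split_ifs with h
  · obtain ⟨hne, hs⟩ := h
    rw [rej_sphere_int hm, rej_ball_int hm] at *
    have hstr : 0 ≤ (φ.withDensity (fun x => ENNReal.ofReal (A x ξ))
        (sphere ξ (rejRad φ A ξ).toReal)).toReal := ENNReal.toReal_nonneg
    have := rej_btr_le_one (φ := φ) hm
    have : 0 ≤ (1 - (φ.withDensity (fun x => ENNReal.ofReal (A x ξ))
        (ball ξ (rejRad φ A ξ).toReal)).toReal) /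
        (φ.withDensity (fun x => ENNReal.ofReal (A x ξ))
          (sphere ξ (rejRad φ A ξ).toReal)).toReal := div_nonneg (by linarith) hstr
    linarith
  · norm_num

theorem rejC_nonneg (hφ : LocFin φ) (hm : Measurable (fun x => A x ξ))
    (h1 : ∀ x, A x ξ ≤ 1) : 0 ≤ rejC φ A ξ := by
  unfold rejC
  split_ifs with h
  · obtain ⟨hne, hs⟩ := h
    rw [rej_sphere_int hm, rej_ball_int hm] at *
    set ν := φ.withDensity (fun x => ENNReal.ofReal (A x ξ)) with hν
    set t := (rejRad φ A ξ).toReal with htdef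
    have hsfin : ν (sphere ξ t) ≠ ⊤ :=
      (nu_fin hφ (kR_le_one h1) isClosed_sphere.measurableSet isBounded_sphere).ne
    have hbfin : ν (ball ξ t) ≠ ⊤ :=
      (nu_fin hφ (kR_le_one h1) measurableSet_ball isBounded_ball).ne
    have hstr : 0 < (ν (sphere ξ t)).toReal := ENNReal.toReal_pos (ne_of_gt hs) hsfin
    have hcb : (1:ℝ≥0∞) ≤ ν (closedBall ξ t) := one_le_cb hφ (kR_le_one h1) (kR_meas hm) hne
    rw [nu_cb_split ξ t] at hcb
    have h1' : 1 ≤ (ν (ball ξ t)).toReal + (ν (sphere ξ t)).toReal :=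
      one_le_add_toReal hbfin hsfin hcb
    have h2 : (1 - (ν (ball ξ t)).toReal) / (ν (sphere ξ t)).toReal ≤ 1 := by
      rw [div_le_one hstr]; linarith
    linarith
  · exact le_refl 0

theorem rejFun_nonneg (hφ : LocFin φ) (hm : Measurable (fun x => A x ξ))
    (h0 : ∀ x, 0 ≤ A x ξ) (h1 : ∀ x, A x ξ ≤ 1) (x : Rd d) : 0 ≤ rejFun φ A x ξ := by
  unfold rejFun
  split_ifs with hlt heq
  · exact le_refl 0
  · exact mul_nonneg (rejC_nonneg hφ hm h1) (h0 x)
  · exact h0 x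

theorem rejFun_le (hφ : LocFin φ) (hm : Measurable (fun x => A x ξ))
    (h0 : ∀ x, 0 ≤ A x ξ) (x : Rd d) : rejFun φ A x ξ ≤ A x ξ := by
  unfold rejFun
  split_ifs with hlt heq
  · exact h0 x
  · have := rejC_le_one (φ := φ) hm
    nlinarith [h0 x]
  · exact le_refl _

theorem rejFun_eq_zero {x : Rd d} (h : ENNReal.ofReal (dist x ξ) < rejRad φ A ξ) :
    rejFun φ A x ξ = 0 := if_pos h

theorem rejFun_eq_self {x : Rd d} (h : rejRad φ A ξ < ENNReal.ofReal (dist x ξ)) :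
    rejFun φ A x ξ = A x ξ := by
  unfold rejFun
  rw [if_neg (not_lt.mpr h.le), if_neg (fun he => absurd he (ne_of_gt h))]

/-- The key exactness identity for the rejection step. -/
theorem rej_lint_eq (hφ : LocFin φ) (hm : Measurable (fun x => A x ξ))
    (h0 : ∀ x, 0 ≤ A x ξ) (h1 : ∀ x, A x ξ ≤ 1)
    (hne : rejRad φ A ξ ≠ ⊤) :
    (∫⁻ x, ENNReal.ofReal (A x ξ - rejFun φ A x ξ) ∂φ) = 1 := by
  set k := fun x => ENNReal.ofReal (A x ξ) with hkdef
  have hk : Measurable k := kR_meas hm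
  have hk1 : ∀ x, k x ≤ 1 := kR_le_one h1
  set t := (rejRad φ A ξ).toReal with htdef
  set cv := rejC φ A ξ with hcv
  have hc1 : cv ≤ 1 := rejC_le_one hm
  have hpt : ∀ x, ENNReal.ofReal (A x ξ - rejFun φ A x ξ) =
      (ball ξ t).indicator k x +
      (sphere ξ t).indicator (fun x => ENNReal.ofReal (1 - cv) * k x) x := by
    intro x
    have hballm : x ∈ ball ξ t ↔ ENNReal.ofReal (dist x ξ) < rejRad φ A ξ := by
      rw [mem_ball]
      exact (ENNReal.ofReal_lt_iff_lt_toReal dist_nonneg hne).symm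
    have hspherem : x ∈ sphere ξ t ↔ ENNReal.ofReal (dist x ξ) = rejRad φ A ξ := by
      rw [mem_sphere]
      constructor
      · intro hh; rw [hh, htdef]; exact ENNReal.ofReal_toReal hne
      · intro hh; rw [htdef, ← hh, ENNReal.toReal_ofReal dist_nonneg]
    unfold rejFun
    split_ifs with hlt heq
    · rw [Set.indicator_of_mem (hballm.mpr hlt), Set.indicator_of_notMem
        (fun hmem => (ne_of_lt hlt) (hspherem.mp hmem)), add_zero, sub_zero]
    · rw [Set.indicator_of_notMem (fun hmem => (ne_of_lt (hballm.mp hmem)) heq),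
        Set.indicator_of_mem (hspherem.mpr heq), zero_add]
      have harith : A x ξ - cv * A x ξ = (1 - cv) * A x ξ := by ring
      rw [harith, ENNReal.ofReal_mul (by linarith)]
    · rw [Set.indicator_of_notMem (fun hmem => hlt (hballm.mp hmem)),
        Set.indicator_of_notMem (fun hmem => heq (hspherem.mp hmem)), add_zero,
        sub_self, ENNReal.ofReal_zero]
  rw [lintegral_congr hpt,
    lintegral_add_left (hk.indicator measurableSet_ball),
    lintegral_indicator measurableSet_ball,
    lintegral_indicator isClosed_sphere.measurableSet,
    lintegral_const_mul _ hk]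
  rw [← nu_ball hk, ← nu_sphere hk]
  have hsfin : φ.withDensity k (sphere ξ t) ≠ ⊤ :=
    (nu_fin hφ hk1 isClosed_sphere.measurableSet isBounded_sphere).ne
  have hbfin : φ.withDensity k (ball ξ t) ≠ ⊤ :=
    (nu_fin hφ hk1 measurableSet_ball isBounded_ball).ne
  have hble : φ.withDensity k (ball ξ t) ≤ 1 := ball_le_one hk
  have hbtr : (φ.withDensity k (ball ξ t)).toReal ≤ 1 := by
    have := ENNReal.toReal_mono ENNReal.one_ne_top hble
    simpa using this
  rcases eq_or_ne (φ.withDensity k (sphere ξ t)) 0 with hs0 | hs0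
  · have hge : 1 ≤ φ.withDensity k (ball ξ t) := by
      have h2 := one_le_cb hφ hk1 hk hne
      have h3 : rad φ k ξ = rejRad φ A ξ := rfl
      rw [h3, ← htdef, nu_cb_split ξ t, hs0, add_zero] at h2
      exact h2
    rw [hs0, mul_zero, add_zero]
    exact le_antisymm hble hge
  · have hcond : rejRad φ A ξ ≠ ⊤ ∧
        0 < ∫⁻ x in sphere ξ (rejRad φ A ξ).toReal, ENNReal.ofReal (A x ξ) ∂φ := by
      refine ⟨hne, ?_⟩
      rw [rej_sphere_int hm]
      refine pos_iff_ne_zero.mpr ?_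
      rw [← htdef]
      exact hs0
    have hcveq : cv = 1 - (1 - (φ.withDensity k (ball ξ t)).toReal) /
        (φ.withDensity k (sphere ξ t)).toReal := by
      rw [hcv]; unfold rejC
      rw [if_pos hcond, rej_sphere_int hm, rej_ball_int hm, ← htdef]
    have hstr : 0 < (φ.withDensity k (sphere ξ t)).toReal :=
      ENNReal.toReal_pos hs0 hsfin
    have h1c : 1 - cv = (1 - (φ.withDensity k (ball ξ t)).toReal) /
        (φ.withDensity k (sphere ξ t)).toReal := by rw [hcveq]; ring
    rw [h1c]
    nth_rewrite 2 [show φ.withDensity k (sphere ξ t) =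
      ENNReal.ofReal (φ.withDensity k (sphere ξ t)).toReal from (ENNReal.ofReal_toReal hsfin).symm]
    rw [← ENNReal.ofReal_mul (div_nonneg (by linarith) hstr.le),
      div_mul_cancel₀ _ (ne_of_gt hstr)]
    nth_rewrite 1 [show φ.withDensity k (ball ξ t) =
      ENNReal.ofReal (φ.withDensity k (ball ξ t)).toReal from (ENNReal.ofReal_toReal hbfin).symm]
    rw [← ENNReal.ofReal_add ENNReal.toReal_nonneg (by linarith)]
    rw [add_sub_cancel]
    exact ENNReal.ofReal_one

theorem rej_lint_le (hφ : LocFin φ) (hm : Measurable (fun x => A x ξ))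
    (h0 : ∀ x, 0 ≤ A x ξ) (h1 : ∀ x, A x ξ ≤ 1) :
    (∫⁻ x, ENNReal.ofReal (A x ξ - rejFun φ A x ξ) ∂φ) ≤ 1 := by
  rcases eq_or_ne (rejRad φ A ξ) ⊤ with htop | hne
  · set k := fun x => ENNReal.ofReal (A x ξ) with hkdef
    have hk : Measurable k := kR_meas hm
    have hpt : ∀ x, ENNReal.ofReal (A x ξ - rejFun φ A x ξ) ≤ k x := by
      intro x
      have hz : rejFun φ A x ξ = 0 := rejFun_eq_zero (htop ▸ ENNReal.ofReal_lt_top)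
      rw [hz, sub_zero]
    calc (∫⁻ x, ENNReal.ofReal (A x ξ - rejFun φ A x ξ) ∂φ) ≤ ∫⁻ x, k x ∂φ :=
        lintegral_mono hpt
    _ = φ.withDensity k univ := by
        rw [withDensity_apply k MeasurableSet.univ, Measure.restrict_univ]
    _ ≤ 1 := univ_le_one hk htop
  · exact (rej_lint_eq hφ hm h0 h1 hne).le

end RejFacts


section MonoFacts

theorem nu_le_nu {μ : Measure (Rd d)} {k k' : Rd d → ℝ≥0∞} (h : ∀ y, k y ≤ k' y)
    {s : Set (Rd d)} (hs : MeasurableSet s) : μ.withDensity k s ≤ μ.withDensity k' s := by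
  rw [withDensity_apply _ hs, withDensity_apply _ hs]
  exact lintegral_mono h

theorem appRad_mono {ψ : Measure (Rd d)} {Rp Rp' : Rd d → Rd d → ℝ} {x : Rd d}
    (h : ∀ ξ, Rp x ξ ≤ Rp' x ξ) : appRad ψ Rp x ≤ appRad ψ Rp' x :=
  rad_anti (fun ξ => ENNReal.ofReal_le_ofReal (by linarith [h ξ]))

theorem rejRad_anti {φ : Measure (Rd d)} {A A' : Rd d → Rd d → ℝ} {ξ : Rd d}
    (h : ∀ x, A x ξ ≤ A' x ξ) : rejRad φ A' ξ ≤ rejRad φ A ξ :=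
  rad_anti (fun x => ENNReal.ofReal_le_ofReal (h x))

theorem appC_eq_formula {ψ : Measure (Rd d)} {Rp : Rd d → Rd d → ℝ} {x : Rd d}
    (hm : Measurable (Rp x)) (hne : appRad ψ Rp x ≠ ⊤)
    (hs : ψ.withDensity (fun ξ => ENNReal.ofReal (1 - Rp x ξ))
      (sphere x (appRad ψ Rp x).toReal) ≠ 0) :
    appC ψ Rp x = 1 - (1 - (ψ.withDensity (fun ξ => ENNReal.ofReal (1 - Rp x ξ))
        (ball x (appRad ψ Rp x).toReal)).toReal) /
      (ψ.withDensity (fun ξ => ENNReal.ofReal (1 - Rp x ξ))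
        (sphere x (appRad ψ Rp x).toReal)).toReal := by
  unfold appC
  rw [if_pos ⟨hne, by rw [app_sphere_int hm]; exact pos_iff_ne_zero.mpr hs⟩,
    app_sphere_int hm, app_ball_int hm]

theorem appC_eq_one_special {ψ : Measure (Rd d)} {Rp : Rd d → Rd d → ℝ} {x : Rd d}
    (hm : Measurable (Rp x))
    (hs : ψ.withDensity (fun ξ => ENNReal.ofReal (1 - Rp x ξ))
      (sphere x (appRad ψ Rp x).toReal) = 0) :
    appC ψ Rp x = 1 := by
  unfold appC
  rw [if_neg]
  rintro ⟨-, hpos⟩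
  rw [app_sphere_int hm, hs] at hpos
  exact lt_irrefl 0 hpos

theorem app_ball_eq_one {ψ : Measure (Rd d)} {Rp : Rd d → Rd d → ℝ} {x : Rd d}
    (hψ : LocFin ψ) (hm : Measurable (Rp x)) (h0 : ∀ ξ, 0 ≤ Rp x ξ)
    (hne : appRad ψ Rp x ≠ ⊤)
    (hs : ψ.withDensity (fun ξ => ENNReal.ofReal (1 - Rp x ξ))
      (sphere x (appRad ψ Rp x).toReal) = 0) :
    ψ.withDensity (fun ξ => ENNReal.ofReal (1 - Rp x ξ))
      (ball x (appRad ψ Rp x).toReal) = 1 := by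
  refine le_antisymm (ball_le_one (kA_meas hm)) ?_
  have h2 := one_le_cb hψ (kA_le_one h0) (kA_meas hm) hne
  have h3 : rad ψ (fun ξ => ENNReal.ofReal (1 - Rp x ξ)) x = appRad ψ Rp x := rfl
  rw [h3, nu_cb_split x _, hs, add_zero] at h2
  exact h2

theorem rejC_eq_formula {φ : Measure (Rd d)} {A : Rd d → Rd d → ℝ} {ξ : Rd d}
    (hm : Measurable (fun x => A x ξ)) (hne : rejRad φ A ξ ≠ ⊤)
    (hs : φ.withDensity (fun x => ENNReal.ofReal (A x ξ))
      (sphere ξ (rejRad φ A ξ).toReal) ≠ 0) :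
    rejC φ A ξ = 1 - (1 - (φ.withDensity (fun x => ENNReal.ofReal (A x ξ))
        (ball ξ (rejRad φ A ξ).toReal)).toReal) /
      (φ.withDensity (fun x => ENNReal.ofReal (A x ξ))
        (sphere ξ (rejRad φ A ξ).toReal)).toReal := by
  unfold rejC
  rw [if_pos ⟨hne, by rw [rej_sphere_int hm]; exact pos_iff_ne_zero.mpr hs⟩,
    rej_sphere_int hm, rej_ball_int hm]

theorem rejC_eq_zero_special {φ : Measure (Rd d)} {A : Rd d → Rd d → ℝ} {ξ : Rd d}
    (hm : Measurable (fun x => A x ξ))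
    (hs : φ.withDensity (fun x => ENNReal.ofReal (A x ξ))
      (sphere ξ (rejRad φ A ξ).toReal) = 0) :
    rejC φ A ξ = 0 := by
  unfold rejC
  rw [if_neg]
  rintro ⟨-, hpos⟩
  rw [rej_sphere_int hm, hs] at hpos
  exact lt_irrefl 0 hpos

theorem appFun_eq_boundary {ψ : Measure (Rd d)} {Rp : Rd d → Rd d → ℝ} {x ξ : Rd d}
    (heq : ENNReal.ofReal (dist x ξ) = appRad ψ Rp x) :
    appFun ψ Rp x ξ = appC ψ Rp x * Rp x ξ + (1 - appC ψ Rp x) := by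
  unfold appFun
  rw [if_neg (by rw [heq]; exact lt_irrefl _), if_pos heq]

theorem rejFun_eq_boundary {φ : Measure (Rd d)} {A : Rd d → Rd d → ℝ} {x ξ : Rd d}
    (heq : ENNReal.ofReal (dist x ξ) = rejRad φ A ξ) :
    rejFun φ A x ξ = rejC φ A ξ * A x ξ := by
  unfold rejFun
  rw [if_neg (by rw [heq]; exact lt_irrefl _), if_pos heq]

theorem appFun_mono {ψ : Measure (Rd d)} {Rp Rp' : Rd d → Rd d → ℝ} {x : Rd d}
    (hψ : LocFin ψ)
    (hm : Measurable (Rp x)) (hm' : Measurable (Rp' x))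
    (h0 : ∀ ξ, 0 ≤ Rp x ξ) (h0' : ∀ ξ, 0 ≤ Rp' x ξ)
    (h1 : ∀ ξ, Rp x ξ ≤ 1) (h1' : ∀ ξ, Rp' x ξ ≤ 1)
    (hle : ∀ ξ, Rp x ξ ≤ Rp' x ξ) (ξ : Rd d) :
    appFun ψ Rp x ξ ≤ appFun ψ Rp' x ξ := by
  have hρ : appRad ψ Rp x ≤ appRad ψ Rp' x := appRad_mono hle
  have hc0 := appC_nonneg hψ hm h0
  have hc1 := appC_le_one hψ hm h0
  have hc0' := appC_nonneg hψ hm' h0'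
  have hc1' := appC_le_one hψ hm' h0'
  rcases lt_trichotomy (ENNReal.ofReal (dist x ξ)) (appRad ψ Rp x) with hlt | heq | hgt
  · rw [appFun_eq_one hlt, appFun_eq_one (lt_of_lt_of_le hlt hρ)]
  · rw [appFun_eq_boundary heq]
    rcases lt_or_eq_of_le (heq ▸ hρ) with hlt' | heq'
    · rw [appFun_eq_one hlt']
      nlinarith [h0 ξ, h1 ξ]
    · rw [appFun_eq_boundary heq']
      -- the hard case
      have hne : appRad ψ Rp x ≠ ⊤ := heq ▸ ENNReal.ofReal_ne_top
      have hne' : appRad ψ Rp' x ≠ ⊤ := heq' ▸ ENNReal.ofReal_ne_top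
      have heqρ : appRad ψ Rp x = appRad ψ Rp' x := heq ▸ heq'
      set t := (appRad ψ Rp x).toReal with htdef
      have ht' : (appRad ψ Rp' x).toReal = t := by rw [← heqρ]
      set k := fun η => ENNReal.ofReal (1 - Rp x η) with hk
      set k' := fun η => ENNReal.ofReal (1 - Rp' x η) with hk'
      have hkk : ∀ η, k' η ≤ k η := fun η => ENNReal.ofReal_le_ofReal (by linarith [hle η])
      have hkey : appC ψ Rp' x * (1 - Rp' x ξ) ≤ appC ψ Rp x * (1 - Rp x ξ) := by
        rcases eq_or_ne (ψ.withDensity k' (sphere x t)) 0 with hs' | hs'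
        · have hcv' : appC ψ Rp' x = 1 := appC_eq_one_special hm' (by rw [ht']; exact hs')
          have hb'1 : ψ.withDensity k' (ball x t) = 1 := by
            have := app_ball_eq_one hψ hm' h0' hne' (by rw [ht']; exact hs')
            rwa [ht'] at this
          have hb1 : ψ.withDensity k (ball x t) = 1 := by
            refine le_antisymm (by rw [htdef]; exact ball_le_one (kA_meas hm)) ?_
            rw [← hb'1]
            exact nu_le_nu hkk measurableSet_ball
          have hcv : appC ψ Rp x = 1 := by
            rcases eq_or_ne (ψ.withDensity k (sphere x t)) 0 with hs | hs
            · exact appC_eq_one_special hm hs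
            · rw [appC_eq_formula hm hne hs, ← htdef, hb1]
              simp
          rw [hcv, hcv', one_mul, one_mul]
          linarith [hle ξ]
        · have hs : ψ.withDensity k (sphere x t) ≠ 0 := by
            intro hz
            exact hs' (le_antisymm (hz ▸ nu_le_nu hkk isClosed_sphere.measurableSet) zero_le)
          have hsfin : ψ.withDensity k (sphere x t) ≠ ⊤ :=
            (nu_fin hψ (kA_le_one h0) isClosed_sphere.measurableSet isBounded_sphere).ne
          have hs'fin : ψ.withDensity k' (sphere x t) ≠ ⊤ :=
            (nu_fin hψ (kA_le_one h0') isClosed_sphere.measurableSet isBounded_sphere).ne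
          have hbfin : ψ.withDensity k (ball x t) ≠ ⊤ :=
            (nu_fin hψ (kA_le_one h0) measurableSet_ball isBounded_ball).ne
          have hcveq : appC ψ Rp x = 1 - (1 - (ψ.withDensity k (ball x t)).toReal) /
              (ψ.withDensity k (sphere x t)).toReal := appC_eq_formula hm hne hs
          have hcveq' : appC ψ Rp' x = 1 - (1 - (ψ.withDensity k' (ball x t)).toReal) /
              (ψ.withDensity k' (sphere x t)).toReal := by
            have := appC_eq_formula hm' hne' (by rw [ht']; exact hs')
            rwa [ht'] at this
          have hble : (ψ.withDensity k (ball x t)).toReal ≤ 1 := by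
            rw [htdef]; exact app_btr_le_one hm
          have hb'b : (ψ.withDensity k' (ball x t)).toReal ≤
              (ψ.withDensity k (ball x t)).toReal :=
            ENNReal.toReal_mono hbfin (nu_le_nu hkk measurableSet_ball)
          have hss' : (ψ.withDensity k' (sphere x t)).toReal ≤
              (ψ.withDensity k (sphere x t)).toReal :=
            ENNReal.toReal_mono hsfin (nu_le_nu hkk isClosed_sphere.measurableSet)
          have hstr' : 0 < (ψ.withDensity k' (sphere x t)).toReal :=
            ENNReal.toReal_pos hs' hs'fin
          have hstr : 0 < (ψ.withDensity k (sphere x t)).toReal := lt_of_lt_of_le hstr' hss'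
          have hdiv : (1 - (ψ.withDensity k (ball x t)).toReal) /
              (ψ.withDensity k (sphere x t)).toReal ≤
              (1 - (ψ.withDensity k' (ball x t)).toReal) /
              (ψ.withDensity k' (sphere x t)).toReal :=
            div_le_div₀ (by linarith) (by linarith) hstr' hss'
          have hcc : appC ψ Rp' x ≤ appC ψ Rp x := by rw [hcveq, hcveq']; linarith
          nlinarith [hle ξ, h1' ξ]
      nlinarith [hkey]
  · rw [appFun_eq_zero hgt]
    exact appFun_nonneg hψ hm' h0' h1' ξ

theorem rejFun_mono {φ : Measure (Rd d)} {A A' : Rd d → Rd d → ℝ} {ξ : Rd d}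
    (hφ : LocFin φ)
    (hm : Measurable (fun x => A x ξ)) (hm' : Measurable (fun x => A' x ξ))
    (h0 : ∀ x, 0 ≤ A x ξ) (h0' : ∀ x, 0 ≤ A' x ξ)
    (h1 : ∀ x, A x ξ ≤ 1) (h1' : ∀ x, A' x ξ ≤ 1)
    (hle : ∀ x, A x ξ ≤ A' x ξ) (x : Rd d) :
    rejFun φ A x ξ ≤ rejFun φ A' x ξ := by
  have hρ : rejRad φ A' ξ ≤ rejRad φ A ξ := rejRad_anti hle
  have hc0 := rejC_nonneg hφ hm h1
  have hc1 := rejC_le_one (φ := φ) (A := A) (ξ := ξ) hm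
  have hc0' := rejC_nonneg hφ hm' h1'
  have hc1' := rejC_le_one (φ := φ) (A := A') (ξ := ξ) hm'
  rcases lt_trichotomy (ENNReal.ofReal (dist x ξ)) (rejRad φ A' ξ) with hlt' | heq' | hgt'
  · rw [rejFun_eq_zero hlt', rejFun_eq_zero (lt_of_lt_of_le hlt' hρ)]
  · rw [rejFun_eq_boundary heq']
    rcases lt_or_eq_of_le (heq' ▸ hρ) with hlt | heq
    · rw [rejFun_eq_zero hlt]
      exact mul_nonneg hc0' (h0' x)
    · rw [rejFun_eq_boundary heq]
      -- hard case: D = r = r'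
      have hne : rejRad φ A ξ ≠ ⊤ := heq ▸ ENNReal.ofReal_ne_top
      have hne' : rejRad φ A' ξ ≠ ⊤ := heq' ▸ ENNReal.ofReal_ne_top
      have heqρ : rejRad φ A ξ = rejRad φ A' ξ := by rw [← heq, ← heq']
      set t := (rejRad φ A ξ).toReal with htdef
      have ht' : (rejRad φ A' ξ).toReal = t := by rw [← heqρ]
      set k := fun y => ENNReal.ofReal (A y ξ) with hk
      set k' := fun y => ENNReal.ofReal (A' y ξ) with hk'
      have hkk : ∀ y, k y ≤ k' y := fun y => ENNReal.ofReal_le_ofReal (hle y)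
      rcases eq_or_ne (φ.withDensity k (sphere ξ t)) 0 with hs | hs
      · have hcv : rejC φ A ξ = 0 := rejC_eq_zero_special hm hs
        rw [hcv, zero_mul]
        exact mul_nonneg hc0' (h0' x)
      · have hs' : φ.withDensity k' (sphere ξ t) ≠ 0 := by
          intro hz
          exact hs (le_antisymm (hz ▸ nu_le_nu hkk isClosed_sphere.measurableSet) zero_le)
        have hsfin : φ.withDensity k (sphere ξ t) ≠ ⊤ :=
          (nu_fin hφ (kR_le_one h1) isClosed_sphere.measurableSet isBounded_sphere).ne
        have hs'fin : φ.withDensity k' (sphere ξ t) ≠ ⊤ :=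
          (nu_fin hφ (kR_le_one h1') isClosed_sphere.measurableSet isBounded_sphere).ne
        have hb'fin : φ.withDensity k' (ball ξ t) ≠ ⊤ :=
          (nu_fin hφ (kR_le_one h1') measurableSet_ball isBounded_ball).ne
        have hcveq : rejC φ A ξ = 1 - (1 - (φ.withDensity k (ball ξ t)).toReal) /
            (φ.withDensity k (sphere ξ t)).toReal := rejC_eq_formula hm hne hs
        have hcveq' : rejC φ A' ξ = 1 - (1 - (φ.withDensity k' (ball ξ t)).toReal) /
            (φ.withDensity k' (sphere ξ t)).toReal := by
          have := rejC_eq_formula hm' hne' (by rw [ht']; exact hs')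
          rwa [ht'] at this
        have hb'le : (φ.withDensity k' (ball ξ t)).toReal ≤ 1 := by
          have := rej_btr_le_one (φ := φ) (A := A') (ξ := ξ) hm'
          rwa [ht'] at this
        have hbb' : (φ.withDensity k (ball ξ t)).toReal ≤
            (φ.withDensity k' (ball ξ t)).toReal :=
          ENNReal.toReal_mono hb'fin (nu_le_nu hkk measurableSet_ball)
        have hss' : (φ.withDensity k (sphere ξ t)).toReal ≤
            (φ.withDensity k' (sphere ξ t)).toReal :=
          ENNReal.toReal_mono hs'fin (nu_le_nu hkk isClosed_sphere.measurableSet)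
        have hstr : 0 < (φ.withDensity k (sphere ξ t)).toReal :=
          ENNReal.toReal_pos hs hsfin
        have hstr' : 0 < (φ.withDensity k' (sphere ξ t)).toReal := lt_of_lt_of_le hstr hss'
        have hdiv : (1 - (φ.withDensity k' (ball ξ t)).toReal) /
            (φ.withDensity k' (sphere ξ t)).toReal ≤
            (1 - (φ.withDensity k (ball ξ t)).toReal) /
            (φ.withDensity k (sphere ξ t)).toReal :=
          div_le_div₀ (by linarith) (by linarith) hstr hss'
        have hcc : rejC φ A ξ ≤ rejC φ A' ξ := by rw [hcveq, hcveq']; linarith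
        nlinarith [hle x, h0 x]
  · rw [rejFun_eq_self hgt']
    rcases lt_trichotomy (ENNReal.ofReal (dist x ξ)) (rejRad φ A ξ) with hlt | heq | hgt
    · rw [rejFun_eq_zero hlt]
      exact h0' x
    · rw [rejFun_eq_boundary heq]
      nlinarith [h0 x, hle x]
    · rw [rejFun_eq_self hgt]
      exact hle x

end MonoFacts


section MeasFacts
variable {μ : Measure (Rd d)}

theorem rad_eq_iSup (μ : Measure (Rd d)) (k : Rd d → ℝ≥0∞) (c : Rd d) :
    rad μ k c = ⨆ q : ℚ, if 0 ≤ (q:ℝ) ∧ (∫⁻ y in closedBall c (q:ℝ), k y ∂μ) ≤ 1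
      then ENNReal.ofReal (q:ℝ) else 0 := by
  apply le_antisymm
  · apply sSup_le
    rintro v ⟨a, ⟨ha, hIa⟩, rfl⟩
    apply le_of_forall_lt
    intro t ht
    obtain ⟨q, hq0, htq, hqa⟩ := ENNReal.lt_iff_exists_rat_btwn.mp ht
    have hcast : ((Real.toNNReal (q:ℝ) : ℝ≥0) : ℝ≥0∞) = ENNReal.ofReal (q:ℝ) := rfl
    have hq0' : (0:ℝ) ≤ (q:ℝ) := by exact_mod_cast hq0
    have hqa' : (q:ℝ) ≤ a :=
      le_of_lt ((ENNReal.ofReal_lt_ofReal_iff_of_nonneg hq0').mp (hcast ▸ hqa))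
    have hmem : 0 ≤ (q:ℝ) ∧ (∫⁻ y in closedBall c (q:ℝ), k y ∂μ) ≤ 1 :=
      ⟨hq0', le_trans (lintegral_mono_set (closedBall_subset_closedBall hqa')) hIa⟩
    calc t < ENNReal.ofReal (q:ℝ) := hcast ▸ htq
    _ = (if 0 ≤ (q:ℝ) ∧ (∫⁻ y in closedBall c (q:ℝ), k y ∂μ) ≤ 1
          then ENNReal.ofReal (q:ℝ) else 0) := (if_pos hmem).symm
    _ ≤ _ := le_iSup (fun q : ℚ => if 0 ≤ (q:ℝ) ∧ (∫⁻ y in closedBall c (q:ℝ), k y ∂μ) ≤ 1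
          then ENNReal.ofReal (q:ℝ) else 0) q
  · apply iSup_le
    intro q
    split_ifs with h
    · exact le_sSup ⟨(q:ℝ), h, rfl⟩
    · exact zero_le

theorem measurable_radH [SFinite μ] {H : Rd d × Rd d → ℝ≥0∞} (hH : Measurable H) :
    Measurable (fun c => rad μ (fun y => H (c, y)) c) := by
  have heq : (fun c => rad μ (fun y => H (c, y)) c) =
      fun c => ⨆ q : ℚ, if 0 ≤ (q:ℝ) ∧
        (∫⁻ y, (if dist y c ≤ (q:ℝ) then H (c, y) else 0) ∂μ) ≤ 1
        then ENNReal.ofReal (q:ℝ) else 0 := by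
    have hint : ∀ (c : Rd d) (q : ℝ), (∫⁻ y in closedBall c q, H (c, y) ∂μ) =
        ∫⁻ y, (if dist y c ≤ q then H (c, y) else 0) ∂μ := by
      intro c q
      rw [← lintegral_indicator measurableSet_closedBall]
      refine lintegral_congr fun y => ?_
      rw [Set.indicator_apply]
      simp only [mem_closedBall]
    funext c
    rw [rad_eq_iSup]
    exact iSup_congr fun q => by rw [hint c (q:ℝ)]
  rw [heq]
  apply Measurable.iSup
  intro q
  have hGmeas : Measurable (fun c => ∫⁻ y, (if dist y c ≤ (q:ℝ) then H (c, y) else 0) ∂μ) := by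
    apply Measurable.lintegral_prod_right (f := fun c y => if dist y c ≤ (q:ℝ) then H (c, y) else 0)
    apply Measurable.ite _ hH measurable_const
    exact measurableSet_le (continuous_dist.measurable.comp
      (measurable_snd.prodMk measurable_fst)) measurable_const
  have hset : MeasurableSet {c : Rd d | 0 ≤ (q:ℝ) ∧
      (∫⁻ y, (if dist y c ≤ (q:ℝ) then H (c, y) else 0) ∂μ) ≤ 1} := by
    rcases le_or_gt 0 (q:ℝ) with hq | hq
    · have : {c : Rd d | 0 ≤ (q:ℝ) ∧
          (∫⁻ y, (if dist y c ≤ (q:ℝ) then H (c, y) else 0) ∂μ) ≤ 1} =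
          {c | (∫⁻ y, (if dist y c ≤ (q:ℝ) then H (c, y) else 0) ∂μ) ≤ 1} := by
        ext c; simp [hq]
      rw [this]
      exact measurableSet_le hGmeas measurable_const
    · have : {c : Rd d | 0 ≤ (q:ℝ) ∧
          (∫⁻ y, (if dist y c ≤ (q:ℝ) then H (c, y) else 0) ∂μ) ≤ 1} = ∅ := by
        ext c; simp [not_le.mpr hq]
      rw [this]
      exact MeasurableSet.empty
  exact Measurable.ite hset measurable_const measurable_const

theorem measurable_sphereIntH [SFinite μ] {H : Rd d × Rd d → ℝ≥0∞} (hH : Measurable H)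
    {g : Rd d → ℝ} (hg : Measurable g) :
    Measurable (fun c => ∫⁻ y in sphere c (g c), H (c, y) ∂μ) := by
  have heq : (fun c => ∫⁻ y in sphere c (g c), H (c, y) ∂μ) =
      fun c => ∫⁻ y, (if dist y c = g c then H (c, y) else 0) ∂μ := by
    funext c
    have hms : MeasurableSet (sphere c (g c)) := isClosed_sphere.measurableSet
    rw [← lintegral_indicator hms]
    refine lintegral_congr fun y => ?_
    rw [Set.indicator_apply]
    simp only [mem_sphere]
  rw [heq]
  apply Measurable.lintegral_prod_right (f := fun c y => if dist y c = g c then H (c, y) else 0)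
  apply Measurable.ite _ hH measurable_const
  exact measurableSet_eq_fun (continuous_dist.measurable.comp
    (measurable_snd.prodMk measurable_fst)) (hg.comp measurable_fst)

theorem measurable_ballIntH [SFinite μ] {H : Rd d × Rd d → ℝ≥0∞} (hH : Measurable H)
    {g : Rd d → ℝ} (hg : Measurable g) :
    Measurable (fun c => ∫⁻ y in ball c (g c), H (c, y) ∂μ) := by
  have heq : (fun c => ∫⁻ y in ball c (g c), H (c, y) ∂μ) =
      fun c => ∫⁻ y, (if dist y c < g c then H (c, y) else 0) ∂μ := by
    funext c
    rw [← lintegral_indicator measurableSet_ball]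
    refine lintegral_congr fun y => ?_
    rw [Set.indicator_apply]
    simp only [mem_ball]
  rw [heq]
  apply Measurable.lintegral_prod_right (f := fun c y => if dist y c < g c then H (c, y) else 0)
  apply Measurable.ite _ hH measurable_const
  exact measurableSet_lt (continuous_dist.measurable.comp
    (measurable_snd.prodMk measurable_fst)) (hg.comp measurable_fst)

variable {ψ φ : Measure (Rd d)} {Rp A : Rd d → Rd d → ℝ}

theorem measurable_appRad [SFinite ψ] (hRp : Measurable (Function.uncurry Rp)) :
    Measurable (fun x => appRad ψ Rp x) :=
  measurable_radH (H := fun p => ENNReal.ofReal (1 - Rp p.1 p.2))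
    ((measurable_const.sub hRp).ennreal_ofReal)

theorem measurable_appC [SFinite ψ] (hRp : Measurable (Function.uncurry Rp)) :
    Measurable (fun x => appC ψ Rp x) := by
  have hH : Measurable (fun p : Rd d × Rd d => ENNReal.ofReal (1 - Rp p.1 p.2)) :=
    (measurable_const.sub hRp).ennreal_ofReal
  have hrad := measurable_appRad (ψ := ψ) hRp
  have hg : Measurable (fun x => (appRad ψ Rp x).toReal) := hrad.ennreal_toReal
  have hS : Measurable (fun x =>
      ∫⁻ ξ in sphere x (appRad ψ Rp x).toReal, ENNReal.ofReal (1 - Rp x ξ) ∂ψ) :=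
    measurable_sphereIntH hH hg
  have hB : Measurable (fun x =>
      ∫⁻ ξ in ball x (appRad ψ Rp x).toReal, ENNReal.ofReal (1 - Rp x ξ) ∂ψ) :=
    measurable_ballIntH hH hg
  unfold appC
  apply Measurable.ite
  · have h1 : MeasurableSet {x : Rd d | appRad ψ Rp x ≠ ⊤} :=
      (hrad (MeasurableSet.singleton ⊤)).compl
    have h2 : MeasurableSet {x : Rd d | 0 <
        ∫⁻ ξ in sphere x (appRad ψ Rp x).toReal, ENNReal.ofReal (1 - Rp x ξ) ∂ψ} :=
      measurableSet_lt measurable_const hS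
    exact h1.inter h2
  · exact (measurable_const.sub ((measurable_const.sub hB.ennreal_toReal).div
      hS.ennreal_toReal))
  · exact measurable_const

theorem measurable_appFun [SFinite ψ] (hRp : Measurable (Function.uncurry Rp)) :
    Measurable (Function.uncurry (appFun ψ Rp)) := by
  have hrad := measurable_appRad (ψ := ψ) hRp
  have hC := measurable_appC (ψ := ψ) hRp
  have hdist : Measurable (fun p : Rd d × Rd d => ENNReal.ofReal (dist p.1 p.2)) :=
    continuous_dist.measurable.ennreal_ofReal
  unfold Function.uncurry appFun
  apply Measurable.ite
  · exact measurableSet_lt hdist (hrad.comp measurable_fst)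
  · exact measurable_const
  · apply Measurable.ite
    · exact measurableSet_eq_fun hdist (hrad.comp measurable_fst)
    · exact ((hC.comp measurable_fst).mul hRp).add
        (measurable_const.sub (hC.comp measurable_fst))
    · exact measurable_const

theorem measurable_rejRad [SFinite φ] (hA : Measurable (Function.uncurry A)) :
    Measurable (fun ξ => rejRad φ A ξ) :=
  measurable_radH (H := fun p => ENNReal.ofReal (A p.2 p.1))
    ((hA.comp measurable_swap).ennreal_ofReal)

theorem measurable_rejC [SFinite φ] (hA : Measurable (Function.uncurry A)) :
    Measurable (fun ξ => rejC φ A ξ) := by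
  have hH : Measurable (fun p : Rd d × Rd d => ENNReal.ofReal (A p.2 p.1)) :=
    (hA.comp measurable_swap).ennreal_ofReal
  have hrad := measurable_rejRad (φ := φ) hA
  have hg : Measurable (fun ξ => (rejRad φ A ξ).toReal) := hrad.ennreal_toReal
  have hS : Measurable (fun ξ =>
      ∫⁻ x in sphere ξ (rejRad φ A ξ).toReal, ENNReal.ofReal (A x ξ) ∂φ) :=
    measurable_sphereIntH hH hg
  have hB : Measurable (fun ξ =>
      ∫⁻ x in ball ξ (rejRad φ A ξ).toReal, ENNReal.ofReal (A x ξ) ∂φ) :=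
    measurable_ballIntH hH hg
  unfold rejC
  apply Measurable.ite
  · have h1 : MeasurableSet {ξ : Rd d | rejRad φ A ξ ≠ ⊤} :=
      (hrad (MeasurableSet.singleton ⊤)).compl
    have h2 : MeasurableSet {ξ : Rd d | 0 <
        ∫⁻ x in sphere ξ (rejRad φ A ξ).toReal, ENNReal.ofReal (A x ξ) ∂φ} :=
      measurableSet_lt measurable_const hS
    exact h1.inter h2
  · exact (measurable_const.sub ((measurable_const.sub hB.ennreal_toReal).div
      hS.ennreal_toReal))
  · exact measurable_const

theorem measurable_rejFun [SFinite φ] (hA : Measurable (Function.uncurry A)) :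
    Measurable (Function.uncurry (rejFun φ A)) := by
  have hrad := measurable_rejRad (φ := φ) hA
  have hC := measurable_rejC (φ := φ) hA
  have hdist : Measurable (fun p : Rd d × Rd d => ENNReal.ofReal (dist p.1 p.2)) :=
    continuous_dist.measurable.ennreal_ofReal
  unfold Function.uncurry rejFun
  apply Measurable.ite
  · exact measurableSet_lt hdist (hrad.comp measurable_snd)
  · exact measurable_const
  · apply Measurable.ite
    · exact measurableSet_eq_fun hdist (hrad.comp measurable_snd)
    · exact (hC.comp measurable_snd).mul hA
    · exact hA

end MeasFacts


section GSFacts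
variable {φ ψ : Measure (Rd d)}

theorem gs_base (hφ : LocFin φ) (hψ : LocFin ψ) : ∀ n,
    Measurable (Function.uncurry (GS_R φ ψ n)) ∧
    (∀ x ξ, 0 ≤ GS_R φ ψ n x ξ ∧ GS_R φ ψ n x ξ ≤ 1) := by
  haveI := locFin_sigmaFinite hφ
  haveI := locFin_sigmaFinite hψ
  intro n
  induction n with
  | zero =>
    refine ⟨?_, fun x ξ => ⟨le_refl 0, zero_le_one⟩⟩
    show Measurable (fun _ : Rd d × Rd d => (0:ℝ))
    exact measurable_const
  | succ n ih =>
    obtain ⟨hmR, hbR⟩ := ih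
    have hmA : Measurable (Function.uncurry (GS_A φ ψ n)) := measurable_appFun hmR
    have hbA : ∀ x ξ, 0 ≤ GS_A φ ψ n x ξ ∧ GS_A φ ψ n x ξ ≤ 1 := fun x ξ =>
      ⟨appFun_nonneg hψ hmR.of_uncurry_left (fun η => (hbR x η).1) (fun η => (hbR x η).2) ξ,
       appFun_le_one hψ hmR.of_uncurry_left (fun η => (hbR x η).1) (fun η => (hbR x η).2) ξ⟩
    refine ⟨measurable_rejFun hmA, fun x ξ => ?_⟩
    refine ⟨rejFun_nonneg hφ hmA.of_uncurry_right (fun y => (hbA y ξ).1)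
      (fun y => (hbA y ξ).2) x, ?_⟩
    exact le_trans (rejFun_le hφ hmA.of_uncurry_right (fun y => (hbA y ξ).1) x) (hbA x ξ).2

variable (hφ : LocFin φ) (hψ : LocFin ψ)
include hφ hψ

theorem gsR_meas (n : ℕ) : Measurable (Function.uncurry (GS_R φ ψ n)) :=
  (gs_base hφ hψ n).1

theorem gsR_nonneg (n : ℕ) (x ξ : Rd d) : 0 ≤ GS_R φ ψ n x ξ :=
  ((gs_base hφ hψ n).2 x ξ).1

theorem gsR_le_one (n : ℕ) (x ξ : Rd d) : GS_R φ ψ n x ξ ≤ 1 :=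
  ((gs_base hφ hψ n).2 x ξ).2

theorem gsA_meas (n : ℕ) : Measurable (Function.uncurry (GS_A φ ψ n)) := by
  haveI := locFin_sigmaFinite hψ
  exact measurable_appFun (gsR_meas hφ hψ n)

theorem gsA_nonneg (n : ℕ) (x ξ : Rd d) : 0 ≤ GS_A φ ψ n x ξ :=
  appFun_nonneg hψ (gsR_meas hφ hψ n).of_uncurry_left
    (fun η => gsR_nonneg hφ hψ n x η) (fun η => gsR_le_one hφ hψ n x η) ξ

theorem gsA_le_one (n : ℕ) (x ξ : Rd d) : GS_A φ ψ n x ξ ≤ 1 :=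
  appFun_le_one hψ (gsR_meas hφ hψ n).of_uncurry_left
    (fun η => gsR_nonneg hφ hψ n x η) (fun η => gsR_le_one hφ hψ n x η) ξ

theorem gsR_succ_eq (n : ℕ) : GS_R φ ψ (n + 1) = rejFun φ (GS_A φ ψ n) := rfl

theorem gsR_succ_le (n : ℕ) (x ξ : Rd d) : GS_R φ ψ n x ξ ≤ GS_R φ ψ (n + 1) x ξ := by
  induction n generalizing x ξ with
  | zero =>
    show (0:ℝ) ≤ GS_R φ ψ 1 x ξ
    exact gsR_nonneg hφ hψ 1 x ξ
  | succ n ih =>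
    have hAmono : ∀ y η, GS_A φ ψ n y η ≤ GS_A φ ψ (n + 1) y η := fun y η =>
      appFun_mono hψ (gsR_meas hφ hψ n).of_uncurry_left
        (gsR_meas hφ hψ (n + 1)).of_uncurry_left
        (fun η' => gsR_nonneg hφ hψ n y η') (fun η' => gsR_nonneg hφ hψ (n + 1) y η')
        (fun η' => gsR_le_one hφ hψ n y η') (fun η' => gsR_le_one hφ hψ (n + 1) y η')
        (fun η' => ih y η') η
    show rejFun φ (GS_A φ ψ n) x ξ ≤ rejFun φ (GS_A φ ψ (n + 1)) x ξ
    exact rejFun_mono hφ (gsA_meas hφ hψ n).of_uncurry_right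
      (gsA_meas hφ hψ (n + 1)).of_uncurry_right
      (fun y => gsA_nonneg hφ hψ n y ξ) (fun y => gsA_nonneg hφ hψ (n + 1) y ξ)
      (fun y => gsA_le_one hφ hψ n y ξ) (fun y => gsA_le_one hφ hψ (n + 1) y ξ)
      (fun y => hAmono y ξ) x

theorem gsA_succ_le (n : ℕ) (x ξ : Rd d) : GS_A φ ψ n x ξ ≤ GS_A φ ψ (n + 1) x ξ :=
  appFun_mono hψ (gsR_meas hφ hψ n).of_uncurry_left
    (gsR_meas hφ hψ (n + 1)).of_uncurry_left
    (fun η => gsR_nonneg hφ hψ n x η) (fun η => gsR_nonneg hφ hψ (n + 1) x η)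
    (fun η => gsR_le_one hφ hψ n x η) (fun η => gsR_le_one hφ hψ (n + 1) x η)
    (fun η => gsR_succ_le hφ hψ n x η) ξ

theorem gsR_mono (x ξ : Rd d) : Monotone (fun n => GS_R φ ψ n x ξ) :=
  monotone_nat_of_le_succ (fun n => gsR_succ_le hφ hψ n x ξ)

theorem gsA_mono (x ξ : Rd d) : Monotone (fun n => GS_A φ ψ n x ξ) :=
  monotone_nat_of_le_succ (fun n => gsA_succ_le hφ hψ n x ξ)

theorem gsR_le_A (n : ℕ) (x ξ : Rd d) : GS_R φ ψ n x ξ ≤ GS_A φ ψ n x ξ := by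
  cases n with
  | zero =>
    show (0:ℝ) ≤ GS_A φ ψ 0 x ξ
    exact gsA_nonneg hφ hψ 0 x ξ
  | succ n =>
    calc GS_R φ ψ (n + 1) x ξ = rejFun φ (GS_A φ ψ n) x ξ := rfl
    _ ≤ GS_A φ ψ n x ξ := rejFun_le hφ (gsA_meas hφ hψ n).of_uncurry_right
        (fun y => gsA_nonneg hφ hψ n y ξ) x
    _ ≤ GS_A φ ψ (n + 1) x ξ := gsA_succ_le hφ hψ n x ξ

theorem gsA_bdd (x ξ : Rd d) : BddAbove (Set.range fun n => GS_A φ ψ n x ξ) := by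
  refine ⟨1, ?_⟩
  rintro y ⟨n, rfl⟩
  exact gsA_le_one hφ hψ n x ξ

theorem gsR_bdd (x ξ : Rd d) : BddAbove (Set.range fun n => GS_R φ ψ n x ξ) := by
  refine ⟨1, ?_⟩
  rintro y ⟨n, rfl⟩
  exact gsR_le_one hφ hψ n x ξ

theorem gsA_le_Alim (n : ℕ) (x ξ : Rd d) : GS_A φ ψ n x ξ ≤ GS_Alim φ ψ x ξ :=
  le_ciSup (gsA_bdd hφ hψ x ξ) n

theorem gsR_le_Rlim (n : ℕ) (x ξ : Rd d) : GS_R φ ψ n x ξ ≤ GS_Rlim φ ψ x ξ :=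
  le_ciSup (gsR_bdd hφ hψ x ξ) n

theorem gsAlim_nonneg (x ξ : Rd d) : 0 ≤ GS_Alim φ ψ x ξ :=
  le_trans (gsA_nonneg hφ hψ 0 x ξ) (gsA_le_Alim hφ hψ 0 x ξ)

theorem gsAlim_le_one (x ξ : Rd d) : GS_Alim φ ψ x ξ ≤ 1 :=
  ciSup_le (fun n => gsA_le_one hφ hψ n x ξ)

theorem gsRlim_nonneg (x ξ : Rd d) : 0 ≤ GS_Rlim φ ψ x ξ :=
  le_trans (gsR_nonneg hφ hψ 0 x ξ) (gsR_le_Rlim hφ hψ 0 x ξ)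

theorem gsRlim_le_one (x ξ : Rd d) : GS_Rlim φ ψ x ξ ≤ 1 :=
  ciSup_le (fun n => gsR_le_one hφ hψ n x ξ)

theorem gsRlim_le_Alim (x ξ : Rd d) : GS_Rlim φ ψ x ξ ≤ GS_Alim φ ψ x ξ :=
  ciSup_le (fun n => le_trans (gsR_le_A hφ hψ n x ξ) (gsA_le_Alim hφ hψ n x ξ))

theorem gsA_tendsto (x ξ : Rd d) :
    Tendsto (fun n => GS_A φ ψ n x ξ) atTop (𝓝 (GS_Alim φ ψ x ξ)) :=
  tendsto_atTop_ciSup (gsA_mono hφ hψ x ξ) (gsA_bdd hφ hψ x ξ)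

theorem gsR_tendsto (x ξ : Rd d) :
    Tendsto (fun n => GS_R φ ψ n x ξ) atTop (𝓝 (GS_Rlim φ ψ x ξ)) :=
  tendsto_atTop_ciSup (gsR_mono hφ hψ x ξ) (gsR_bdd hφ hψ x ξ)

theorem siteOpt_nonneg (x ξ : Rd d) : 0 ≤ siteOptimal φ ψ x ξ :=
  sub_nonneg.mpr (gsRlim_le_Alim hφ hψ x ξ)

theorem siteOpt_le_one (x ξ : Rd d) : siteOptimal φ ψ x ξ ≤ 1 := by
  unfold siteOptimal
  linarith [gsAlim_le_one hφ hψ x ξ, gsRlim_nonneg hφ hψ x ξ]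

end GSFacts

/-- real sup of a `[0,1]`-valued sequence via `ℝ≥0∞`. -/
theorem real_iSup_eq_toReal (a : ℕ → ℝ) (h0 : ∀ n, 0 ≤ a n) (h1 : ∀ n, a n ≤ 1) :
    (⨆ n, a n) = (⨆ n, ENNReal.ofReal (a n)).toReal := by
  have hbdd : BddAbove (Set.range a) := ⟨1, by rintro y ⟨n, rfl⟩; exact h1 n⟩
  have hne : (⨆ n, ENNReal.ofReal (a n)) ≠ ⊤ := by
    refine ne_of_lt (lt_of_le_of_lt (iSup_le fun n => ?_) ENNReal.one_lt_top)
    calc ENNReal.ofReal (a n) ≤ ENNReal.ofReal 1 := ENNReal.ofReal_le_ofReal (h1 n)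
    _ = 1 := ENNReal.ofReal_one
  apply le_antisymm
  · apply ciSup_le
    intro n
    rw [show a n = (ENNReal.ofReal (a n)).toReal from (ENNReal.toReal_ofReal (h0 n)).symm]
    exact ENNReal.toReal_mono hne (le_iSup (fun n => ENNReal.ofReal (a n)) n)
  · have hle : (⨆ n, ENNReal.ofReal (a n)) ≤ ENNReal.ofReal (⨆ n, a n) :=
      iSup_le fun n => ENNReal.ofReal_le_ofReal (le_ciSup hbdd n)
    calc (⨆ n, ENNReal.ofReal (a n)).toReal ≤ (ENNReal.ofReal (⨆ n, a n)).toReal :=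
      ENNReal.toReal_mono ENNReal.ofReal_ne_top hle
    _ = ⨆ n, a n := ENNReal.toReal_ofReal (le_trans (h0 0) (le_ciSup hbdd 0))

theorem measurable_Alim {φ ψ : Measure (Rd d)} (hφ : LocFin φ) (hψ : LocFin ψ) :
    Measurable (Function.uncurry (GS_Alim φ ψ)) := by
  have hA : Function.uncurry (GS_Alim φ ψ) =
      fun p => (⨆ n, ENNReal.ofReal (GS_A φ ψ n p.1 p.2)).toReal := by
    funext p
    exact real_iSup_eq_toReal _ (fun n => gsA_nonneg hφ hψ n p.1 p.2)
      (fun n => gsA_le_one hφ hψ n p.1 p.2)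
  rw [hA]
  exact (Measurable.iSup (fun n => (gsA_meas hφ hψ n).ennreal_ofReal)).ennreal_toReal

theorem measurable_Rlim {φ ψ : Measure (Rd d)} (hφ : LocFin φ) (hψ : LocFin ψ) :
    Measurable (Function.uncurry (GS_Rlim φ ψ)) := by
  have hR : Function.uncurry (GS_Rlim φ ψ) =
      fun p => (⨆ n, ENNReal.ofReal (GS_R φ ψ n p.1 p.2)).toReal := by
    funext p
    exact real_iSup_eq_toReal _ (fun n => gsR_nonneg hφ hψ n p.1 p.2)
      (fun n => gsR_le_one hφ hψ n p.1 p.2)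
  rw [hR]
  exact (Measurable.iSup (fun n => (gsR_meas hφ hψ n).ennreal_ofReal)).ennreal_toReal

theorem measurable_siteOpt {φ ψ : Measure (Rd d)} (hφ : LocFin φ) (hψ : LocFin ψ) :
    Measurable (Function.uncurry (siteOptimal φ ψ)) :=
  (measurable_Alim hφ hψ).sub (measurable_Rlim hφ hψ)

section Stability
variable {φ ψ : Measure (Rd d)} (hφ : LocFin φ) (hψ : LocFin ψ)
include hφ hψ

theorem gs_app_exact (n : ℕ) (x : Rd d) (hne : appRad ψ (GS_R φ ψ n) x ≠ ⊤) :
    (∫⁻ ξ, ENNReal.ofReal (GS_A φ ψ n x ξ - GS_R φ ψ n x ξ) ∂ψ) = 1 :=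
  app_lint_eq hψ (gsR_meas hφ hψ n).of_uncurry_left (fun η => gsR_nonneg hφ hψ n x η) hne

theorem gs_rej_exact (n : ℕ) (ξ : Rd d) (hne : rejRad φ (GS_A φ ψ n) ξ ≠ ⊤) :
    (∫⁻ x, ENNReal.ofReal (GS_A φ ψ n x ξ - GS_R φ ψ (n + 1) x ξ) ∂φ) = 1 :=
  rej_lint_eq hφ (gsA_meas hφ hψ n).of_uncurry_right (fun y => gsA_nonneg hφ hψ n y ξ)
    (fun y => gsA_le_one hφ hψ n y ξ) hne

/-- If the site `x₀` desires the center `ξ₀` then `A(x₀, ξ₀) = 1`. -/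
theorem alim_eq_one_of_siteDesires {x₀ ξ₀ : Rd d}
    (hd : SiteDesires ψ (siteOptimal φ ψ) x₀ ξ₀) : GS_Alim φ ψ x₀ ξ₀ = 1 := by
  obtain ⟨hflt, hcase⟩ := hd
  suffices hA1 : ∃ n, ENNReal.ofReal (dist x₀ ξ₀) < appRad ψ (GS_R φ ψ n) x₀ by
    obtain ⟨n, hn⟩ := hA1
    have h1 : GS_A φ ψ n x₀ ξ₀ = 1 := appFun_eq_one hn
    exact le_antisymm (gsAlim_le_one hφ hψ x₀ ξ₀) (h1 ▸ gsA_le_Alim hφ hψ n x₀ ξ₀)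
  rcases hcase with hunex | ⟨ξ₁, hdist, hfpos⟩
  · -- unexhausted case
    by_contra hc
    push_neg at hc
    set D := ENNReal.ofReal (dist x₀ ξ₀) with hD
    set I := ∫⁻ ξ, ENNReal.ofReal (siteOptimal φ ψ x₀ ξ) ∂ψ with hI
    have hIlt : I < 1 := hunex
    have hIne : I ≠ ⊤ := (lt_of_lt_of_le hIlt le_top).ne
    set B := closedBall x₀ (dist x₀ ξ₀) with hB
    set T := fun n => ∫⁻ ξ in B, ENNReal.ofReal (GS_Rlim φ ψ x₀ ξ - GS_R φ ψ n x₀ ξ) ∂ψ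
      with hT
    -- Step 1 : 1 ≤ I + T n for every n
    have hstep1 : ∀ n, (1:ℝ≥0∞) ≤ I + T n := by
      intro n
      have hne : appRad ψ (GS_R φ ψ n) x₀ ≠ ⊤ :=
        (lt_of_le_of_lt (hc n) ENNReal.ofReal_lt_top).ne
      have hzero : ∀ ξ ∈ Bᶜ, ENNReal.ofReal (GS_A φ ψ n x₀ ξ - GS_R φ ψ n x₀ ξ) = 0 := by
        intro ξ hξ
        have hgt : dist x₀ ξ₀ < dist x₀ ξ := by
          have h' := hξ
          simp only [hB, mem_compl_iff, mem_closedBall, not_le] at h'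
          calc dist x₀ ξ₀ < dist ξ x₀ := h'
          _ = dist x₀ ξ := dist_comm _ _
        have hA0 : GS_A φ ψ n x₀ ξ = 0 := by
          apply appFun_eq_zero
          calc appRad ψ (GS_R φ ψ n) x₀ ≤ D := hc n
          _ < ENNReal.ofReal (dist x₀ ξ) := by
              rw [hD, ENNReal.ofReal_lt_ofReal_iff (lt_of_le_of_lt dist_nonneg hgt)]
              exact hgt
        rw [hA0]
        exact ENNReal.ofReal_of_nonpos (by linarith [gsR_nonneg hφ hψ n x₀ ξ])
      have hexact := gs_app_exact hφ hψ n x₀ hne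
      have hmes : Measurable (fun ξ => ENNReal.ofReal (GS_A φ ψ n x₀ ξ - GS_R φ ψ n x₀ ξ)) :=
        ((gsA_meas hφ hψ n).of_uncurry_left.sub
          (gsR_meas hφ hψ n).of_uncurry_left).ennreal_ofReal
      have hsplit : (1:ℝ≥0∞) =
          ∫⁻ ξ in B, ENNReal.ofReal (GS_A φ ψ n x₀ ξ - GS_R φ ψ n x₀ ξ) ∂ψ := by
        rw [← hexact, ← lintegral_add_compl _ (measurableSet_closedBall (x := x₀)
          (ε := dist x₀ ξ₀))]
        have : ∫⁻ ξ in Bᶜ, ENNReal.ofReal (GS_A φ ψ n x₀ ξ - GS_R φ ψ n x₀ ξ) ∂ψ = 0 := by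
          rw [setLIntegral_congr_fun measurableSet_closedBall.compl hzero]
          simp
        rw [this, add_zero]
      have hptle : ∀ ξ, ENNReal.ofReal (GS_A φ ψ n x₀ ξ - GS_R φ ψ n x₀ ξ) ≤
          ENNReal.ofReal (siteOptimal φ ψ x₀ ξ) +
          ENNReal.ofReal (GS_Rlim φ ψ x₀ ξ - GS_R φ ψ n x₀ ξ) := by
        intro ξ
        calc ENNReal.ofReal (GS_A φ ψ n x₀ ξ - GS_R φ ψ n x₀ ξ) ≤
            ENNReal.ofReal (siteOptimal φ ψ x₀ ξ + (GS_Rlim φ ψ x₀ ξ - GS_R φ ψ n x₀ ξ)) := by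
              apply ENNReal.ofReal_le_ofReal
              unfold siteOptimal
              linarith [gsA_le_Alim hφ hψ n x₀ ξ]
        _ ≤ _ := ENNReal.ofReal_add_le
      calc (1:ℝ≥0∞) = ∫⁻ ξ in B, ENNReal.ofReal (GS_A φ ψ n x₀ ξ - GS_R φ ψ n x₀ ξ) ∂ψ :=
            hsplit
      _ ≤ ∫⁻ ξ in B, (ENNReal.ofReal (siteOptimal φ ψ x₀ ξ) +
            ENNReal.ofReal (GS_Rlim φ ψ x₀ ξ - GS_R φ ψ n x₀ ξ)) ∂ψ :=
          lintegral_mono (fun ξ => hptle ξ)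
      _ = (∫⁻ ξ in B, ENNReal.ofReal (siteOptimal φ ψ x₀ ξ) ∂ψ) + T n :=
          lintegral_add_left ((measurable_siteOpt hφ hψ).of_uncurry_left.ennreal_ofReal) _
      _ ≤ I + T n := by
          gcongr
          exact setLIntegral_le_lintegral _ _
    -- Step 2 : T n → 0
    have hstep2 : Tendsto T atTop (𝓝 0) := by
      have h0 : (0:ℝ≥0∞) = ∫⁻ ξ in B, (fun ξ => (0:ℝ≥0∞)) ξ ∂ψ := by simp
      rw [hT, h0]
      apply tendsto_lintegral_of_dominated_convergence (bound := fun _ => (1:ℝ≥0∞))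
      · intro n
        exact ((measurable_Rlim hφ hψ).of_uncurry_left.sub
          (gsR_meas hφ hψ n).of_uncurry_left).ennreal_ofReal
      · intro n
        refine ae_of_all _ (fun ξ => ?_)
        calc ENNReal.ofReal (GS_Rlim φ ψ x₀ ξ - GS_R φ ψ n x₀ ξ) ≤ ENNReal.ofReal 1 :=
          ENNReal.ofReal_le_ofReal (by
            linarith [gsRlim_le_one hφ hψ x₀ ξ, gsR_nonneg hφ hψ n x₀ ξ])
        _ = 1 := ENNReal.ofReal_one
      · rw [lintegral_const, one_mul, Measure.restrict_apply_univ]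
        exact (hψ B isBounded_closedBall).ne
      · refine ae_of_all _ (fun ξ => ?_)
        have htend : Tendsto (fun n => GS_Rlim φ ψ x₀ ξ - GS_R φ ψ n x₀ ξ) atTop (𝓝 0) := by
          have := (tendsto_const_nhds (x := GS_Rlim φ ψ x₀ ξ) (f := atTop)).sub
            (gsR_tendsto hφ hψ x₀ ξ)
          simpa using this
        have := (ENNReal.continuous_ofReal.tendsto 0).comp htend
        simpa [Function.comp_def] using this
    -- Step 3 : contradiction
    have hε : (0:ℝ≥0∞) < 1 - I := tsub_pos_of_lt hIlt
    obtain ⟨n, hn⟩ := (hstep2.eventually_lt_const hε).exists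
    have : (1:ℝ≥0∞) < 1 := by
      calc (1:ℝ≥0∞) ≤ I + T n := hstep1 n
      _ < I + (1 - I) := ENNReal.add_lt_add_left hIne hn
      _ = 1 := add_tsub_cancel_of_le hIlt.le
    exact lt_irrefl _ this
  · -- farther center case
    have hApos : 0 < GS_Alim φ ψ x₀ ξ₁ := by
      apply lt_of_lt_of_le hfpos
      unfold siteOptimal
      linarith [gsRlim_nonneg hφ hψ x₀ ξ₁]
    obtain ⟨n, hn⟩ := (lt_ciSup_iff (gsA_bdd hφ hψ x₀ ξ₁)).mp hApos
    have hle : ENNReal.ofReal (dist x₀ ξ₁) ≤ appRad ψ (GS_R φ ψ n) x₀ :=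
      le_appRad_of_ne (ne_of_gt hn)
    refine ⟨n, lt_of_lt_of_le ?_ hle⟩
    rw [ENNReal.ofReal_lt_ofReal_iff (lt_of_le_of_lt dist_nonneg hdist)]
    exact hdist

/-- If the center `ξ₀` desires the site `x₀` then `R(x₀, ξ₀) = 0`. -/
theorem rlim_eq_zero_of_centerDesires {x₀ ξ₀ : Rd d}
    (hd : CenterDesires φ (siteOptimal φ ψ) x₀ ξ₀) : GS_Rlim φ ψ x₀ ξ₀ = 0 := by
  obtain ⟨hflt, hcase⟩ := hd
  suffices hr : ∀ n, ENNReal.ofReal (dist x₀ ξ₀) < rejRad φ (GS_A φ ψ n) ξ₀ by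
    have hz : ∀ n, GS_R φ ψ n x₀ ξ₀ = 0 := by
      intro n
      cases n with
      | zero => rfl
      | succ n => exact rejFun_eq_zero (hr n)
    unfold GS_Rlim
    simp only [hz]
    exact ciSup_const
  rcases hcase with hunsat | ⟨x₁, hdist, hfpos⟩
  · -- unsated case
    by_contra hc
    push_neg at hc
    obtain ⟨n, hn⟩ := hc
    set D := ENNReal.ofReal (dist x₀ ξ₀) with hD
    set J := ∫⁻ x, ENNReal.ofReal (siteOptimal φ ψ x ξ₀) ∂φ with hJ
    have hJlt : J < 1 := hunsat
    have hJne : J ≠ ⊤ := (lt_of_lt_of_le hJlt le_top).ne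
    set B := closedBall ξ₀ (dist x₀ ξ₀) with hB
    set T := fun m => ∫⁻ x in B,
      ENNReal.ofReal (GS_Rlim φ ψ x ξ₀ - GS_R φ ψ (n + m + 1) x ξ₀) ∂φ with hT
    have hrm : ∀ m, rejRad φ (GS_A φ ψ (n + m)) ξ₀ ≤ D := by
      intro m
      refine le_trans ?_ hn
      apply rejRad_anti
      intro y
      exact gsA_mono hφ hψ y ξ₀ (Nat.le_add_right n m)
    -- Step 1
    have hstep1 : ∀ m, (1:ℝ≥0∞) ≤ J + T m := by
      intro m
      have hne : rejRad φ (GS_A φ ψ (n + m)) ξ₀ ≠ ⊤ :=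
        (lt_of_le_of_lt (hrm m) ENNReal.ofReal_lt_top).ne
      have hzero : ∀ x ∈ Bᶜ,
          ENNReal.ofReal (GS_A φ ψ (n + m) x ξ₀ - GS_R φ ψ (n + m + 1) x ξ₀) = 0 := by
        intro x hx
        have hgt : dist x₀ ξ₀ < dist x ξ₀ := by
          have := hx
          simpa only [hB, mem_compl_iff, mem_closedBall, not_le] using this
        have hRA : GS_R φ ψ (n + m + 1) x ξ₀ = GS_A φ ψ (n + m) x ξ₀ := by
          apply rejFun_eq_self
          calc rejRad φ (GS_A φ ψ (n + m)) ξ₀ ≤ D := hrm m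
          _ < ENNReal.ofReal (dist x ξ₀) := by
              rw [hD, ENNReal.ofReal_lt_ofReal_iff (lt_of_le_of_lt dist_nonneg hgt)]
              exact hgt
        rw [hRA, sub_self, ENNReal.ofReal_zero]
      have hexact := gs_rej_exact hφ hψ (n + m) ξ₀ hne
      have hsplit : (1:ℝ≥0∞) =
          ∫⁻ x in B, ENNReal.ofReal (GS_A φ ψ (n + m) x ξ₀ - GS_R φ ψ (n + m + 1) x ξ₀) ∂φ := by
        rw [← hexact, ← lintegral_add_compl _ (measurableSet_closedBall (x := ξ₀)
          (ε := dist x₀ ξ₀))]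
        have : ∫⁻ x in Bᶜ,
            ENNReal.ofReal (GS_A φ ψ (n + m) x ξ₀ - GS_R φ ψ (n + m + 1) x ξ₀) ∂φ = 0 := by
          rw [setLIntegral_congr_fun measurableSet_closedBall.compl hzero]
          simp
        rw [this, add_zero]
      have hptle : ∀ x, ENNReal.ofReal (GS_A φ ψ (n + m) x ξ₀ - GS_R φ ψ (n + m + 1) x ξ₀) ≤
          ENNReal.ofReal (siteOptimal φ ψ x ξ₀) +
          ENNReal.ofReal (GS_Rlim φ ψ x ξ₀ - GS_R φ ψ (n + m + 1) x ξ₀) := by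
        intro x
        calc ENNReal.ofReal (GS_A φ ψ (n + m) x ξ₀ - GS_R φ ψ (n + m + 1) x ξ₀) ≤
            ENNReal.ofReal (siteOptimal φ ψ x ξ₀ +
              (GS_Rlim φ ψ x ξ₀ - GS_R φ ψ (n + m + 1) x ξ₀)) := by
              apply ENNReal.ofReal_le_ofReal
              unfold siteOptimal
              linarith [gsA_le_Alim hφ hψ (n + m) x ξ₀]
        _ ≤ _ := ENNReal.ofReal_add_le
      calc (1:ℝ≥0∞) =
          ∫⁻ x in B, ENNReal.ofReal (GS_A φ ψ (n + m) x ξ₀ - GS_R φ ψ (n + m + 1) x ξ₀) ∂φ :=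
            hsplit
      _ ≤ ∫⁻ x in B, (ENNReal.ofReal (siteOptimal φ ψ x ξ₀) +
            ENNReal.ofReal (GS_Rlim φ ψ x ξ₀ - GS_R φ ψ (n + m + 1) x ξ₀)) ∂φ :=
          lintegral_mono (fun x => hptle x)
      _ = (∫⁻ x in B, ENNReal.ofReal (siteOptimal φ ψ x ξ₀) ∂φ) + T m :=
          lintegral_add_left ((measurable_siteOpt hφ hψ).of_uncurry_right.ennreal_ofReal) _
      _ ≤ J + T m := by
          gcongr
          exact setLIntegral_le_lintegral _ _
    -- Step 2
    have hstep2 : Tendsto T atTop (𝓝 0) := by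
      have h0 : (0:ℝ≥0∞) = ∫⁻ x in B, (fun x => (0:ℝ≥0∞)) x ∂φ := by simp
      rw [hT, h0]
      apply tendsto_lintegral_of_dominated_convergence (bound := fun _ => (1:ℝ≥0∞))
      · intro m
        exact ((measurable_Rlim hφ hψ).of_uncurry_right.sub
          (gsR_meas hφ hψ (n + m + 1)).of_uncurry_right).ennreal_ofReal
      · intro m
        refine ae_of_all _ (fun x => ?_)
        calc ENNReal.ofReal (GS_Rlim φ ψ x ξ₀ - GS_R φ ψ (n + m + 1) x ξ₀) ≤
            ENNReal.ofReal 1 := ENNReal.ofReal_le_ofReal (by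
              linarith [gsRlim_le_one hφ hψ x ξ₀, gsR_nonneg hφ hψ (n + m + 1) x ξ₀])
        _ = 1 := ENNReal.ofReal_one
      · rw [lintegral_const, one_mul, Measure.restrict_apply_univ]
        exact (hφ B isBounded_closedBall).ne
      · refine ae_of_all _ (fun x => ?_)
        have hsh : Tendsto (fun m => GS_R φ ψ (n + m + 1) x ξ₀) atTop
            (𝓝 (GS_Rlim φ ψ x ξ₀)) := by
          have hmono : Tendsto (fun m => n + m + 1) atTop atTop := by
            apply tendsto_atTop_atTop.mpr
            intro b
            exact ⟨b, fun a ha => by omega⟩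
          exact (gsR_tendsto hφ hψ x ξ₀).comp hmono
        have htend : Tendsto (fun m => GS_Rlim φ ψ x ξ₀ - GS_R φ ψ (n + m + 1) x ξ₀)
            atTop (𝓝 0) := by
          have := (tendsto_const_nhds (x := GS_Rlim φ ψ x ξ₀) (f := atTop)).sub hsh
          simpa using this
        have := (ENNReal.continuous_ofReal.tendsto 0).comp htend
        simpa [Function.comp_def] using this
    -- Step 3
    have hε : (0:ℝ≥0∞) < 1 - J := tsub_pos_of_lt hJlt
    obtain ⟨m, hm⟩ := (hstep2.eventually_lt_const hε).exists
    have : (1:ℝ≥0∞) < 1 := by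
      calc (1:ℝ≥0∞) ≤ J + T m := hstep1 m
      _ < J + (1 - J) := ENNReal.add_lt_add_left hJne hm
      _ = 1 := add_tsub_cancel_of_le hJlt.le
    exact lt_irrefl _ this
  · -- farther site case
    have hkey : ∀ n, ENNReal.ofReal (dist x₁ ξ₀) ≤ rejRad φ (GS_A φ ψ n) ξ₀ := by
      by_contra hc
      push_neg at hc
      obtain ⟨n, hn⟩ := hc
      have hRA : ∀ m, n ≤ m → GS_R φ ψ (m + 1) x₁ ξ₀ = GS_A φ ψ m x₁ ξ₀ := by
        intro m hm
        apply rejFun_eq_self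
        refine lt_of_le_of_lt ?_ hn
        apply rejRad_anti
        intro y
        exact gsA_mono hφ hψ y ξ₀ hm
      have hAR : GS_Alim φ ψ x₁ ξ₀ ≤ GS_Rlim φ ψ x₁ ξ₀ := by
        apply ciSup_le
        intro m
        calc GS_A φ ψ m x₁ ξ₀ ≤ GS_A φ ψ (max m n) x₁ ξ₀ :=
              gsA_mono hφ hψ x₁ ξ₀ (le_max_left m n)
        _ = GS_R φ ψ (max m n + 1) x₁ ξ₀ := (hRA _ (le_max_right m n)).symm
        _ ≤ GS_Rlim φ ψ x₁ ξ₀ := gsR_le_Rlim hφ hψ _ x₁ ξ₀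
      unfold siteOptimal at hfpos
      linarith
    intro n
    refine lt_of_lt_of_le ?_ (hkey n)
    rw [ENNReal.ofReal_lt_ofReal_iff (lt_of_le_of_lt dist_nonneg hdist)]
    exact hdist

end Stability


section SubBal
variable {φ ψ : Measure (Rd d)} (hφ : LocFin φ) (hψ : LocFin ψ)
include hφ hψ

theorem siteOpt_int_psi (x : Rd d) :
    (∫⁻ ξ, ENNReal.ofReal (siteOptimal φ ψ x ξ) ∂ψ) ≤ 1 := by
  have hpt : ∀ ξ, ENNReal.ofReal (siteOptimal φ ψ x ξ) =
      Filter.liminf (fun n => ENNReal.ofReal (GS_A φ ψ n x ξ - GS_R φ ψ n x ξ)) atTop := by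
    intro ξ
    symm
    apply Filter.Tendsto.liminf_eq
    have htend : Tendsto (fun n => GS_A φ ψ n x ξ - GS_R φ ψ n x ξ) atTop
        (𝓝 (siteOptimal φ ψ x ξ)) :=
      (gsA_tendsto hφ hψ x ξ).sub (gsR_tendsto hφ hψ x ξ)
    exact (ENNReal.continuous_ofReal.tendsto _).comp htend
  calc (∫⁻ ξ, ENNReal.ofReal (siteOptimal φ ψ x ξ) ∂ψ)
      = ∫⁻ ξ, Filter.liminf (fun n =>
          ENNReal.ofReal (GS_A φ ψ n x ξ - GS_R φ ψ n x ξ)) atTop ∂ψ :=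
        lintegral_congr hpt
  _ ≤ Filter.liminf (fun n =>
        ∫⁻ ξ, ENNReal.ofReal (GS_A φ ψ n x ξ - GS_R φ ψ n x ξ) ∂ψ) atTop :=
      lintegral_liminf_le (fun n => ((gsA_meas hφ hψ n).of_uncurry_left.sub
        (gsR_meas hφ hψ n).of_uncurry_left).ennreal_ofReal)
  _ ≤ Filter.liminf (fun _ : ℕ => (1:ℝ≥0∞)) atTop := by
      exact Filter.liminf_le_liminf (Filter.Eventually.of_forall (fun n =>
        app_lint_le hψ (gsR_meas hφ hψ n).of_uncurry_left
          (fun η => gsR_nonneg hφ hψ n x η)))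
  _ = 1 := Filter.liminf_const 1

theorem siteOpt_int_phi (ξ : Rd d) :
    (∫⁻ x, ENNReal.ofReal (siteOptimal φ ψ x ξ) ∂φ) ≤ 1 := by
  have hpt : ∀ x, ENNReal.ofReal (siteOptimal φ ψ x ξ) =
      Filter.liminf (fun n => ENNReal.ofReal (GS_A φ ψ n x ξ - GS_R φ ψ (n + 1) x ξ)) atTop := by
    intro x
    symm
    apply Filter.Tendsto.liminf_eq
    have htend : Tendsto (fun n => GS_A φ ψ n x ξ - GS_R φ ψ (n + 1) x ξ) atTop
        (𝓝 (siteOptimal φ ψ x ξ)) :=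
      (gsA_tendsto hφ hψ x ξ).sub ((gsR_tendsto hφ hψ x ξ).comp (tendsto_add_atTop_nat 1))
    exact (ENNReal.continuous_ofReal.tendsto _).comp htend
  calc (∫⁻ x, ENNReal.ofReal (siteOptimal φ ψ x ξ) ∂φ)
      = ∫⁻ x, Filter.liminf (fun n =>
          ENNReal.ofReal (GS_A φ ψ n x ξ - GS_R φ ψ (n + 1) x ξ)) atTop ∂φ :=
        lintegral_congr hpt
  _ ≤ Filter.liminf (fun n =>
        ∫⁻ x, ENNReal.ofReal (GS_A φ ψ n x ξ - GS_R φ ψ (n + 1) x ξ) ∂φ) atTop :=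
      lintegral_liminf_le (fun n => ((gsA_meas hφ hψ n).of_uncurry_right.sub
        (gsR_meas hφ hψ (n + 1)).of_uncurry_right).ennreal_ofReal)
  _ ≤ Filter.liminf (fun _ : ℕ => (1:ℝ≥0∞)) atTop := by
      exact Filter.liminf_le_liminf (Filter.Eventually.of_forall (fun n =>
        rej_lint_le hφ (gsA_meas hφ hψ n).of_uncurry_right
          (fun y => gsA_nonneg hφ hψ n y ξ) (fun y => gsA_le_one hφ hψ n y ξ)))
  _ = 1 := Filter.liminf_const 1

end SubBal

-- INSERT_HERE
end GSP

/-- The site-optimal density is a stable constrained density. -/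
theorem stmt2 {d : ℕ} (φ ψ : Measure (Rd d)) (hφ : LocFin φ) (hψ : LocFin ψ) :
    IsStableDensity φ ψ (siteOptimal φ ψ) := by
  constructor
  · refine ⟨⟨GSP.measurable_siteOpt hφ hψ, fun x ξ => GSP.siteOpt_nonneg hφ hψ x ξ,
      fun x => GSP.siteOpt_int_psi hφ hψ x, fun ξ => GSP.siteOpt_int_phi hφ hψ ξ⟩,
      fun x ξ => GSP.siteOpt_le_one hφ hψ x ξ⟩
  · rintro ⟨x₀, ξ₀, hsd, hcd⟩
    have hA := GSP.alim_eq_one_of_siteDesires hφ hψ hsd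
    have hR := GSP.rlim_eq_zero_of_centerDesires hφ hψ hcd
    have hone : siteOptimal φ ψ x₀ ξ₀ = 1 := by
      unfold siteOptimal
      rw [hA, hR]
      ring
    exact absurd hone (ne_of_lt hsd.1)
end
end
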